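/- arXiv:1808.06487 — 5 statements merged into one kernel-verified Lean document; each statement's English description precedes it below -/
import Mathlib

section
/- The number of lattice points in the polytope with vertices (0,0), (a,0), (b, q−2), (0, q−2) equals ((q−1)(a+b+1) + gcd(a−b, q−2) + 1)/2. -/
lemma qlp_ediv_add_neg (M n : ℤ) (hM : 0 < M) :
    n / M + (-n) / M = if M ∣ n then 0 else -1 := by
  by_cases h : M ∣ n
  · simp only [h, if_true]
    obtain ⟨c, rfl⟩ := h
    rw [Int.mul_ediv_cancel_left _ hM.ne', show -(M*c) = M * (-c) by ring,
      Int.mul_ediv_cancel_left _ hM.ne']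
    ring
  · simp only [h, if_false]
    have hr0 : 0 ≤ n % M := Int.emod_nonneg n hM.ne'
    have hrM : n % M < M := Int.emod_lt_of_pos n hM
    have hrne : n % M ≠ 0 := fun hc => h (Int.dvd_of_emod_eq_zero hc)
    have hn : n = M * (n / M) + n % M := (Int.mul_ediv_add_emod n M).symm
    have h2 : -n = (M - n % M) + M * (-(n / M) - 1) := by linarith
    have h3 : (M - n % M) / M = 0 := Int.ediv_eq_zero_of_lt (by omega) (by omega)
    rw [h2, Int.add_mul_ediv_left _ _ hM.ne', h3]
    ring

lemma qlp_card_dvd (D M : ℤ) (hD : 0 ≤ D) (hM : 0 < M) :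
    ((Finset.Icc (0:ℤ) M).filter (fun y => M ∣ D*y)).card = Int.gcd D M + 1 := by
  set g : ℕ := Int.gcd D M with hgdef
  have hg : 0 < g := Int.gcd_pos_iff.mpr (Or.inr hM.ne')
  have hgZ : (0:ℤ) < (g:ℤ) := by exact_mod_cast hg
  set k : ℤ := M / (g:ℤ) with hkdef
  have hgM : (g:ℤ) ∣ M := Int.gcd_dvd_right D M
  have hgD : (g:ℤ) ∣ D := Int.gcd_dvd_left D M
  have hkM : k * (g:ℤ) = M := Int.ediv_mul_cancel hgM
  have hk : 0 < k := by
    rcases lt_trichotomy k 0 with h|h|h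
    · nlinarith
    · rw [← hkM, h] at hM; simp at hM
    · exact h
  have hcop : IsCoprime (D / (g:ℤ)) k := by
    rw [Int.isCoprime_iff_gcd_eq_one]
    exact Int.gcd_div_gcd_div_gcd hg
  have hDg : (D / (g:ℤ)) * (g:ℤ) = D := Int.ediv_mul_cancel hgD
  have key : ∀ y : ℤ, (M ∣ D * y ↔ k ∣ y) := by
    intro y
    constructor
    · intro h
      have heq : ((D / (g:ℤ)) * y) * (g:ℤ) = D * y := by
        rw [show ((D / (g:ℤ)) * y) * (g:ℤ) = ((D / (g:ℤ)) * (g:ℤ)) * y from by ring, hDg]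
      have h1 : k * (g:ℤ) ∣ ((D / (g:ℤ)) * y) * (g:ℤ) := by rw [hkM, heq]; exact h
      have h2 : k ∣ (D / (g:ℤ)) * y := (mul_dvd_mul_iff_right hgZ.ne').mp h1
      exact hcop.symm.dvd_of_dvd_mul_left h2
    · rintro ⟨c, rfl⟩
      refine ⟨(D / (g:ℤ)) * c, ?_⟩
      calc D * (k * c) = ((D / (g:ℤ)) * (g:ℤ)) * (k * c) := by rw [hDg]
        _ = (k * (g:ℤ)) * ((D / (g:ℤ)) * c) := by ring
        _ = M * ((D / (g:ℤ)) * c) := by rw [hkM]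
  have himg : (Finset.Icc (0:ℤ) M).filter (fun y => M ∣ D*y)
      = (Finset.Icc (0:ℤ) (g:ℤ)).image (fun j => k * j) := by
    ext y
    simp only [Finset.mem_filter, Finset.mem_Icc, Finset.mem_image, key]
    constructor
    · rintro ⟨⟨h0, hle⟩, c, rfl⟩
      refine ⟨c, ⟨by nlinarith, by nlinarith⟩, rfl⟩
    · rintro ⟨j, ⟨h0, hle⟩, rfl⟩
      exact ⟨⟨by nlinarith, by nlinarith⟩, j, rfl⟩
  rw [himg, Finset.card_image_of_injective _ (mul_right_injective₀ hk.ne'),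
    Int.card_Icc]
  omega

lemma qlp_sum (A B M : ℤ) (h0B : 0 ≤ B) (hBA : B ≤ A) (hM : 0 < M) :
    2 * ∑ y ∈ Finset.Icc (0:ℤ) M, ((M*A - (A-B)*y)/M)
      = (M+1)*(A+B-1) + (Int.gcd (A-B) M + 1) := by
  set D : ℤ := A - B with hDdef
  have hD : 0 ≤ D := by omega
  have hrefl : ∑ y ∈ Finset.Icc (0:ℤ) M, ((M*A - D*y)/M)
      = ∑ y ∈ Finset.Icc (0:ℤ) M, ((M*A - D*(M-y))/M) := by
    refine Finset.sum_nbij' (fun y => M - y) (fun y => M - y) ?_ ?_ ?_ ?_ ?_ <;>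
        simp only [Finset.mem_Icc] <;> intro y hy
    · omega
    · omega
    · omega
    · omega
    · congr 1; ring
  have hpt : ∀ y ∈ Finset.Icc (0:ℤ) M,
      (M*A - D*y)/M + (M*A - D*(M-y))/M
        = (A + B - 1) + (if M ∣ D*y then 1 else 0) := by
    intro y _
    have e1 : (M*A - D*y)/M = (-(D*y))/M + A := by
      rw [show M*A - D*y = -(D*y) + M*A by ring, Int.add_mul_ediv_left _ _ hM.ne']
    have e2 : (M*A - D*(M-y))/M = (D*y)/M + (A - D) := by
      rw [show M*A - D*(M-y) = D*y + M*(A-D) by ring, Int.add_mul_ediv_left _ _ hM.ne']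
    rw [e1, e2]
    have := qlp_ediv_add_neg M (D*y) hM
    by_cases h : M ∣ D*y <;> simp [h] at this ⊢ <;> omega
  have h2 : 2 * ∑ y ∈ Finset.Icc (0:ℤ) M, ((M*A - D*y)/M)
      = ∑ y ∈ Finset.Icc (0:ℤ) M,
          ((A + B - 1) + (if M ∣ D*y then 1 else 0)) := by
    rw [two_mul]
    nth_rewrite 2 [hrefl]
    rw [← Finset.sum_add_distrib]
    exact Finset.sum_congr rfl hpt
  have hcard := qlp_card_dvd D M hD hM
  rw [h2, Finset.sum_add_distrib, Finset.sum_const, Finset.sum_boole, hcard,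
    Int.card_Icc]
  have htn : (((M + 1 - 0).toNat : ℕ) : ℤ) = M + 1 := by omega
  rw [nsmul_eq_mul, htn]
  push_cast
  ring

lemma qlp_count (A B M : ℤ) (h0B : 0 ≤ B) (hBA : B ≤ A) (hM : 0 < M) :
    2 * (Set.ncard {p : ℤ×ℤ | 0 ≤ p.1 ∧ 0 ≤ p.2 ∧ p.2 ≤ M ∧
          M*p.1 + (A-B)*p.2 ≤ M*A} : ℤ)
      = (M+1)*(A+B+1) + Int.gcd (A-B) M + 1 := by
  set D : ℤ := A - B with hDdef
  have hD : 0 ≤ D := by omega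
  set F : Finset (ℤ×ℤ) := (Finset.Icc (0:ℤ) M).biUnion
    (fun y => (Finset.Icc (0:ℤ) ((M*A - D*y)/M)).image (fun x => (x, y))) with hF
  have hrow_nonneg : ∀ y : ℤ, y ≤ M → 0 ≤ (M*A - D*y)/M := by
    intro y hy
    exact Int.ediv_nonneg (by nlinarith) hM.le
  have hSF : {p : ℤ×ℤ | 0 ≤ p.1 ∧ 0 ≤ p.2 ∧ p.2 ≤ M ∧ M*p.1 + D*p.2 ≤ M*A}
      = (F : Set (ℤ×ℤ)) := by
    ext p
    simp only [Set.mem_setOf_eq, hF, Finset.coe_biUnion, Finset.mem_coe,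
      Finset.mem_biUnion, Finset.mem_image, Finset.mem_Icc, Set.mem_iUnion]
    constructor
    · rintro ⟨h1, h2, h3, h4⟩
      refine ⟨p.2, ⟨h2, h3⟩, p.1, ⟨h1, ?_⟩, rfl⟩
      rw [Int.le_ediv_iff_mul_le hM]
      linarith
    · rintro ⟨y, ⟨hy0, hyM⟩, x, ⟨hx0, hx1⟩, rfl⟩
      rw [Int.le_ediv_iff_mul_le hM] at hx1
      exact ⟨hx0, hy0, hyM, by linarith⟩
  have hcardF : (F.card : ℤ) = ∑ y ∈ Finset.Icc (0:ℤ) M, ((M*A - D*y)/M + 1) := by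
    rw [hF, Finset.card_biUnion]
    · push_cast
      refine Finset.sum_congr rfl (fun y hy => ?_)
      rw [Finset.card_image_of_injective _ (fun a b h => (Prod.mk.injEq _ _ _ _).mp h |>.1),
        Int.card_Icc]
      simp only [Finset.mem_Icc] at hy
      have := hrow_nonneg y hy.2
      omega
    · intro y hy y' hy' hne
      simp only [Finset.disjoint_left, Finset.mem_image]
      rintro p ⟨x, _, rfl⟩ ⟨x', _, h⟩
      exact hne ((Prod.mk.injEq _ _ _ _).mp h.symm |>.2.symm ▸ rfl)
  have hsum := qlp_sum A B M h0B hBA hM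
  rw [Finset.sum_add_distrib, Finset.sum_const, Int.card_Icc,
    nsmul_eq_mul] at hcardF
  rw [hSF, Set.ncard_coe_finset]
  have htn : (((M + 1 - 0).toNat : ℕ) : ℤ) = M + 1 := by omega
  rw [htn] at hcardF
  rw [hcardF]
  linarith

lemma qlp_hull (A B M : ℝ) (h0B : 0 ≤ B) (hBA : B ≤ A) (hM : 0 < M) :
    convexHull ℝ ({((0:ℝ),(0:ℝ)), (A,0), (B,M), ((0:ℝ),M)} : Set (ℝ×ℝ))
      = {p : ℝ×ℝ | 0 ≤ p.1 ∧ 0 ≤ p.2 ∧ p.2 ≤ M ∧ M*p.1 + (A-B)*p.2 ≤ M*A} := by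
  set V : Set (ℝ×ℝ) := {((0:ℝ),(0:ℝ)), (A,0), (B,M), ((0:ℝ),M)} with hV
  apply le_antisymm
  · apply convexHull_min
    · rintro p hp
      simp only [hV, Set.mem_insert_iff, Set.mem_singleton_iff] at hp
      simp only [Set.mem_setOf_eq]
      rcases hp with rfl|rfl|rfl|rfl <;> refine ⟨?_, ?_, ?_, ?_⟩ <;>
        (try norm_num) <;> nlinarith
    · rintro ⟨x1,y1⟩ ⟨hx1,hy1,hy1M,hl1⟩ ⟨x2,y2⟩ ⟨hx2,hy2,hy2M,hl2⟩ s t hs ht hst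
      dsimp only at hx1 hy1 hy1M hl1 hx2 hy2 hy2M hl2
      simp only [Prod.smul_mk, smul_eq_mul, Prod.mk_add_mk, Set.mem_setOf_eq]
      refine ⟨by nlinarith [mul_nonneg hs hx1, mul_nonneg ht hx2],
        by nlinarith [mul_nonneg hs hy1, mul_nonneg ht hy2],
        by nlinarith [mul_le_mul_of_nonneg_left hy1M hs, mul_le_mul_of_nonneg_left hy2M ht],
        ?_⟩
      have h3 : s * (M*A) + t * (M*A) = M*A := by rw [← add_mul, hst, one_mul]
      nlinarith [mul_le_mul_of_nonneg_left hl1 hs, mul_le_mul_of_nonneg_left hl2 ht, h3]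
  · rintro ⟨x, y⟩ ⟨hx, hy, hyM, hl⟩
    simp only [Set.mem_setOf_eq] at hx hy hyM hl
    have h00 : (((0:ℝ),(0:ℝ)) : ℝ×ℝ) ∈ convexHull ℝ V := subset_convexHull ℝ V (by simp [hV])
    have hA0 : ((A,(0:ℝ)) : ℝ×ℝ) ∈ convexHull ℝ V := subset_convexHull ℝ V (by simp [hV])
    have hBM : ((B,M) : ℝ×ℝ) ∈ convexHull ℝ V := subset_convexHull ℝ V (by simp [hV])
    have h0M : (((0:ℝ),M) : ℝ×ℝ) ∈ convexHull ℝ V := subset_convexHull ℝ V (by simp [hV])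
    have hcx := convex_convexHull ℝ V
    set t : ℝ := y / M with htdef
    have ht0 : 0 ≤ t := div_nonneg hy hM.le
    have ht1 : t ≤ 1 := by rw [htdef, div_le_one hM]; exact hyM
    have htM : t * M = y := div_mul_cancel₀ y hM.ne'
    set c : ℝ := (1-t)*A + t*B with hcdef
    have hMc : M * c = M*A - (A-B)*y := by
      rw [hcdef, htdef]; field_simp; ring
    have hxc : x ≤ c := by
      have h1 : M * x ≤ M * c := by rw [hMc]; linarith
      exact (mul_le_mul_iff_right₀ hM).mp h1
    have hc0 : 0 ≤ c := le_trans hx hxc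
    by_cases hcz : c = 0
    · have hx0 : x = 0 := le_antisymm (hcz ▸ hxc) hx
      have hmem := hcx h00 h0M (by linarith : (0:ℝ) ≤ 1 - t) ht0 (by ring)
      have heq : (1-t) • (((0:ℝ),(0:ℝ)) : ℝ×ℝ) + t • (((0:ℝ),M) : ℝ×ℝ) = (x, y) := by
        simp only [Prod.smul_mk, smul_eq_mul, Prod.mk_add_mk, Prod.mk.injEq]
        constructor
        · rw [hx0]; ring
        · rw [← htM]; ring
      rwa [heq] at hmem
    · have hcpos : 0 < c := lt_of_le_of_ne hc0 (Ne.symm hcz)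
      set s : ℝ := x / c with hsdef
      have hs0 : 0 ≤ s := div_nonneg hx hcpos.le
      have hs1 : s ≤ 1 := by rw [hsdef, div_le_one hcpos]; exact hxc
      have hsc : s * c = x := div_mul_cancel₀ x hcz
      have hu : ((s*A, (0:ℝ)) : ℝ×ℝ) ∈ convexHull ℝ V := by
        have hmem := hcx h00 hA0 (by linarith : (0:ℝ) ≤ 1 - s) hs0 (by ring)
        have heq : (1-s) • (((0:ℝ),(0:ℝ)) : ℝ×ℝ) + s • ((A,(0:ℝ)) : ℝ×ℝ) = (s*A, 0) := by
          simp only [Prod.smul_mk, smul_eq_mul, Prod.mk_add_mk, Prod.mk.injEq]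
          constructor <;> ring
        rwa [heq] at hmem
      have hv : ((s*B, M) : ℝ×ℝ) ∈ convexHull ℝ V := by
        have hmem := hcx h0M hBM (by linarith : (0:ℝ) ≤ 1 - s) hs0 (by ring)
        have heq : (1-s) • (((0:ℝ),M) : ℝ×ℝ) + s • ((B,M) : ℝ×ℝ) = (s*B, M) := by
          simp only [Prod.smul_mk, smul_eq_mul, Prod.mk_add_mk, Prod.mk.injEq]
          constructor <;> ring
        rwa [heq] at hmem
      have hmem := hcx hu hv (by linarith : (0:ℝ) ≤ 1 - t) ht0 (by ring)
      have heq : (1-t) • ((s*A, (0:ℝ)) : ℝ×ℝ) + t • ((s*B, M) : ℝ×ℝ) = (x, y) := by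
        simp only [Prod.smul_mk, smul_eq_mul, Prod.mk_add_mk, Prod.mk.injEq]
        constructor
        · rw [← hsc, hcdef]; ring
        · rw [← htM]; ring
      rwa [heq] at hmem

/-- The number of lattice points in the polytope with vertices
`(0,0), (a,0), (b,q−2), (0,q−2)` (with `0 ≤ b ≤ a ≤ q−2`) equals
`((q−1)(a+b+1) + gcd(a−b, q−2) + 1)/2`. -/
theorem quadrilateral_lattice_points (q a b : ℕ) (hq : 3 ≤ q)
    (hba : b ≤ a) (haq : a ≤ q - 2) :
    Set.ncard {p : ℤ × ℤ |
        ((p.1 : ℝ), (p.2 : ℝ)) ∈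
          convexHull ℝ {((0 : ℝ), (0 : ℝ)), ((a : ℝ), 0), ((b : ℝ), (q : ℝ) - 2),
            (0, (q : ℝ) - 2)}} =
      ((q - 1) * (a + b + 1) + Nat.gcd (a - b) (q - 2) + 1) / 2 := by
  have hMr : (0:ℝ) < (q:ℝ) - 2 := by
    have : (3:ℝ) ≤ (q:ℝ) := by exact_mod_cast hq
    linarith
  have hBr : (0:ℝ) ≤ (b:ℝ) := by positivity
  have hBAr : (b:ℝ) ≤ (a:ℝ) := by exact_mod_cast hba
  have hhull := qlp_hull (a:ℝ) (b:ℝ) ((q:ℝ) - 2) hBr hBAr hMr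
  have hMz : (0:ℤ) < (q:ℤ) - 2 := by omega
  have hBz : (0:ℤ) ≤ (b:ℤ) := by positivity
  have hBAz : (b:ℤ) ≤ (a:ℤ) := by exact_mod_cast hba
  have hsets : {p : ℤ × ℤ |
        ((p.1 : ℝ), (p.2 : ℝ)) ∈
          convexHull ℝ {((0 : ℝ), (0 : ℝ)), ((a : ℝ), 0), ((b : ℝ), (q : ℝ) - 2),
            (0, (q : ℝ) - 2)}}
      = {p : ℤ×ℤ | 0 ≤ p.1 ∧ 0 ≤ p.2 ∧ p.2 ≤ (q:ℤ)-2 ∧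
          ((q:ℤ)-2)*p.1 + ((a:ℤ)-(b:ℤ))*p.2 ≤ ((q:ℤ)-2)*(a:ℤ)} := by
    ext p
    rw [Set.mem_setOf_eq, hhull, Set.mem_setOf_eq, Set.mem_setOf_eq]
    dsimp only
    constructor
    · rintro ⟨h1, h2, h3, h4⟩
      refine ⟨by exact_mod_cast h1, by exact_mod_cast h2, ?_, ?_⟩
      · have : (p.2:ℝ) ≤ ((q:ℤ):ℝ) - 2 := by push_cast; push_cast at h3; linarith
        exact_mod_cast this
      · have : (((q:ℤ)-2)*p.1 + ((a:ℤ)-(b:ℤ))*p.2 : ℝ) ≤ ((((q:ℤ)-2)*(a:ℤ) : ℤ) : ℝ) := by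
          push_cast; push_cast at h4; linarith
        exact_mod_cast this
    · rintro ⟨h1, h2, h3, h4⟩
      have h3' : ((p.2:ℤ):ℝ) ≤ (((q:ℤ)-2 : ℤ):ℝ) := by exact_mod_cast h3
      have h4' : ((((q:ℤ)-2)*p.1 + ((a:ℤ)-(b:ℤ))*p.2 : ℤ):ℝ)
          ≤ ((((q:ℤ)-2)*(a:ℤ) : ℤ):ℝ) := by exact_mod_cast h4
      push_cast at h3' h4'
      refine ⟨by exact_mod_cast h1, by exact_mod_cast h2, by linarith, by linarith⟩
  rw [hsets]
  have hcount := qlp_count (a:ℤ) (b:ℤ) ((q:ℤ)-2) hBz hBAz hMz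
  set N : ℕ := Set.ncard {p : ℤ×ℤ | 0 ≤ p.1 ∧ 0 ≤ p.2 ∧ p.2 ≤ (q:ℤ)-2 ∧
      ((q:ℤ)-2)*p.1 + ((a:ℤ)-(b:ℤ))*p.2 ≤ ((q:ℤ)-2)*(a:ℤ)} with hN
  have hgcd : Int.gcd ((a:ℤ)-(b:ℤ)) ((q:ℤ)-2) = Nat.gcd (a-b) (q-2) := by
    rw [show (a:ℤ)-(b:ℤ) = ((a-b : ℕ):ℤ) by push_cast [Nat.cast_sub hba]; ring,
      show (q:ℤ)-2 = ((q-2 : ℕ):ℤ) by push_cast [Nat.cast_sub (show 2 ≤ q by omega)]; ring,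
      Int.gcd_natCast_natCast]
  rw [hgcd] at hcount
  have hnum : 2 * (N:ℤ) = (((q-1)*(a+b+1) + Nat.gcd (a-b) (q-2) + 1 : ℕ) : ℤ) := by
    rw [hcount]
    push_cast [Nat.cast_sub (show 1 ≤ q by omega)]
    ring
  have hnat : 2 * N = (q-1)*(a+b+1) + Nat.gcd (a-b) (q-2) + 1 := by exact_mod_cast hnum
  omega
end

section
/- A nonzero polynomial f in the F_q-span of the monomials x^i y^j with (i,j) in the lattice points of the polytope with vertices (0,0),(a,0),(b,q−2),(0,q−2) (0 ≤ b ≤ a ≤ q−2) has at most (q−1)² − (q−1−a) zeros on the torus (F_q*)². -/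
open MvPolynomial

private lemma fin2_decomp (d : Fin 2 →₀ ℕ) :
    d = Finsupp.single 0 (d 0) + Finsupp.single 1 (d 1) := by
  ext k
  fin_cases k <;> simp [Finsupp.single_apply]

private lemma fin2_eq_iff (d : Fin 2 →₀ ℕ) (i j : ℕ) :
    d = Finsupp.single 0 i + Finsupp.single 1 j ↔ d 0 = i ∧ d 1 = j := by
  constructor
  · rintro rfl; simp [Finsupp.single_apply]
  · rintro ⟨h0, h1⟩; rw [fin2_decomp d, h0, h1]

/-- Evaluation of a two-variable polynomial at all points of the torus `(Fˣ)²`. -/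
noncomputable def torusEval (F : Type*) [Field F] :
    MvPolynomial (Fin 2) F →ₗ[F] (Fˣ × Fˣ → F) :=
  LinearMap.pi fun t : Fˣ × Fˣ =>
    (MvPolynomial.aeval fun i : Fin 2 => if i = 0 then (t.1 : F) else (t.2 : F)).toLinearMap

/-- The lattice points of the polytope with vertices `(0,0), (a,0), (b,q−2), (0,q−2)`. -/
def latticeU (q a b : ℕ) : Set (ℕ × ℕ) :=
  {u : ℕ × ℕ | ((u.1 : ℝ), (u.2 : ℝ)) ∈
    convexHull ℝ {((0 : ℝ), (0 : ℝ)), ((a : ℝ), 0), ((b : ℝ), (q : ℝ) - 2),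
      (0, (q : ℝ) - 2)}}

noncomputable def Phi (F : Type*) [Field F] :
    MvPolynomial (Fin 2) F →ₐ[F] Polynomial (Polynomial F) :=
  MvPolynomial.aeval (fun i : Fin 2 => if i = 0 then Polynomial.X else Polynomial.C Polynomial.X)

lemma coeff_Phi {F : Type*} [Field F] (f : MvPolynomial (Fin 2) F) (i j : ℕ) :
    ((Phi F f).coeff i).coeff j
      = MvPolynomial.coeff (Finsupp.single 0 i + Finsupp.single 1 j) f := by
  induction f using MvPolynomial.induction_on' with
  | monomial d c =>
    rw [Phi, MvPolynomial.aeval_monomial,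
      Finsupp.prod_fintype _ _ (fun i => pow_zero _), Fin.prod_univ_two]
    norm_num
    have h2 : (Polynomial.X : Polynomial (Polynomial F)) ^ d 0 * Polynomial.C Polynomial.X ^ d 1
        = Polynomial.C ((Polynomial.X : Polynomial F) ^ d 1) * Polynomial.X ^ d 0 := by
      rw [← Polynomial.C_pow]; ring
    rw [h2, Polynomial.coeff_C_mul, Polynomial.coeff_X_pow]
    simp only [fin2_eq_iff]
    by_cases hi : i = d 0 <;> by_cases hj : j = d 1 <;>
      simp [hi, hj, Polynomial.coeff_X_pow, eq_comm]
  | add p q hp hq =>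
    simp [map_add, Polynomial.coeff_add, MvPolynomial.coeff_add, hp, hq]

lemma Phi_ne_zero {F : Type*} [Field F] {f : MvPolynomial (Fin 2) F} (hf : f ≠ 0) :
    Phi F f ≠ 0 := by
  intro h
  apply hf
  ext d
  rw [fin2_decomp d, ← coeff_Phi, h]
  simp

/-- evaluation compatibility -/
lemma eval_Phi {F : Type*} [Field F] (f : MvPolynomial (Fin 2) F) (x y : F) :
    Polynomial.eval x (Polynomial.map (Polynomial.evalRingHom y) (Phi F f))
      = MvPolynomial.aeval (fun i : Fin 2 => if i = 0 then x else y) f := by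
  have key : ((Polynomial.aeval x : Polynomial F →ₐ[F] F).comp
      ((Polynomial.mapAlgHom (Polynomial.aeval y : Polynomial F →ₐ[F] F)).comp (Phi F)))
      = MvPolynomial.aeval (fun i : Fin 2 => if i = 0 then x else y) := by
    apply MvPolynomial.algHom_ext
    intro i
    fin_cases i <;>
      simp [Phi, Polynomial.mapAlgHom, Polynomial.coe_aeval_eq_eval]
  have h2 := DFunLike.congr_fun key f
  simp only [AlgHom.coe_comp, Function.comp_apply, Polynomial.coe_aeval_eq_eval,
    Polynomial.mapAlgHom] at h2 ⊢
  convert h2 using 3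
  · rfl
  · rfl

/-- lattice bound -/
lemma latticeU_bound {q a b : ℕ} (hq : 2 ≤ q) (hba : b ≤ a) {u : ℕ × ℕ}
    (hu : u ∈ latticeU q a b) : u.1 ≤ a ∧ u.2 ≤ q - 2 := by
  have hC : Convex ℝ {p : ℝ × ℝ | p.1 ≤ (a : ℝ) ∧ p.2 ≤ (q : ℝ) - 2} := by
    have h1 : Convex ℝ {p : ℝ × ℝ | p.1 ≤ (a : ℝ)} :=
      convex_halfSpace_le (LinearMap.fst ℝ ℝ ℝ).isLinear _
    have h2 : Convex ℝ {p : ℝ × ℝ | p.2 ≤ (q : ℝ) - 2} :=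
      convex_halfSpace_le (LinearMap.snd ℝ ℝ ℝ).isLinear _
    exact h1.inter h2
  have hsub : {((0 : ℝ), (0 : ℝ)), ((a : ℝ), 0), ((b : ℝ), (q : ℝ) - 2), (0, (q : ℝ) - 2)}
      ⊆ {p : ℝ × ℝ | p.1 ≤ (a : ℝ) ∧ p.2 ≤ (q : ℝ) - 2} := by
    have hq' : (0 : ℝ) ≤ (q : ℝ) - 2 := by
      have : (2 : ℝ) ≤ q := by exact_mod_cast hq
      linarith
    have hba' : (b : ℝ) ≤ (a : ℝ) := by exact_mod_cast hba
    have ha' : (0 : ℝ) ≤ (a : ℝ) := Nat.cast_nonneg a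
    intro p hp
    simp only [Set.mem_insert_iff, Set.mem_singleton_iff] at hp
    rcases hp with rfl | rfl | rfl | rfl <;> constructor <;> simp_all
  have := convexHull_min hsub hC hu
  obtain ⟨h1, h2⟩ := this
  have h1' : (u.1 : ℝ) ≤ (a : ℝ) := h1
  have h2' : (u.2 : ℝ) ≤ (q : ℝ) - 2 := h2
  constructor
  · exact_mod_cast h1'
  · have : (u.2 : ℝ) + 2 ≤ (q : ℝ) := by linarith
    have h3 : u.2 + 2 ≤ q := by exact_mod_cast this
    omega

/-- A nonzero polynomial in the span of the monomials with exponents in the polytope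
with vertices `(0,0),(a,0),(b,q−2),(0,q−2)` has at most `(q−1)² − (q−1−a)` zeros on
the torus `(Fˣ)²`. -/
theorem toric_zero_bound (F : Type*) [Field F] [Fintype F] [DecidableEq F] (a b : ℕ)
    (hba : b ≤ a) (haq : a ≤ Fintype.card F - 2)
    (f : MvPolynomial (Fin 2) F)
    (hf : f ∈ Submodule.span F
      {m : MvPolynomial (Fin 2) F | ∃ u ∈ latticeU (Fintype.card F) a b,
        m = X 0 ^ u.1 * X 1 ^ u.2})
    (hf0 : f ≠ 0) :
    (Finset.univ.filter fun t : Fˣ × Fˣ => torusEval F f t = 0).card ≤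
      (Fintype.card F - 1) ^ 2 - (Fintype.card F - 1 - a) := by
  classical
  set q := Fintype.card F with hq
  have hq2 : 2 ≤ q := Fintype.one_lt_card
  -- support bound
  have hsupp : ∀ d ∈ f.support, d 0 ≤ a ∧ d 1 ≤ q - 2 := by
    clear hf0
    induction hf using Submodule.span_induction with
    | mem m hm =>
      obtain ⟨u, hu, rfl⟩ := hm
      obtain ⟨hu1, hu2⟩ := latticeU_bound hq2 hba hu
      intro d hd
      have hmono : (X (0:Fin 2) : MvPolynomial (Fin 2) F) ^ u.1 * X 1 ^ u.2
          = monomial (Finsupp.single 0 u.1 + Finsupp.single 1 u.2) 1 := by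
        rw [X_pow_eq_monomial, X_pow_eq_monomial, monomial_mul, mul_one]
      rw [hmono, MvPolynomial.support_monomial, if_neg one_ne_zero,
        Finset.mem_singleton] at hd
      subst hd
      constructor
      · simpa using hu1
      · simpa using hu2
    | zero => simp
    | add x y hx hy ihx ihy =>
      intro d hd
      rcases Finset.mem_union.mp (MvPolynomial.support_add hd) with h | h
      · exact ihx d h
      · exact ihy d h
    | smul c x hx ih =>
      intro d hd
      exact ih d (MvPolynomial.support_smul hd)
  -- the family of one-variable polynomials
  set P : Fˣ → Polynomial F :=
    fun y => Polynomial.map (Polynomial.evalRingHom (y:F)) (Phi F f) with hP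
  have heval : ∀ t : Fˣ × Fˣ, torusEval F f t = Polynomial.eval (t.1 : F) (P t.2) := by
    intro t
    rw [hP, eval_Phi]
    rfl
  have hPdeg : ∀ y : Fˣ, (P y).natDegree ≤ a := by
    intro y
    refine le_trans Polynomial.natDegree_map_le ?_
    rw [Polynomial.natDegree_le_iff_coeff_eq_zero]
    intro N hN
    ext j
    rw [coeff_Phi, Polynomial.coeff_zero]
    by_contra h
    have hmem : (Finsupp.single 0 N + Finsupp.single 1 j) ∈ f.support :=
      MvPolynomial.mem_support_iff.mpr h
    have := (hsupp _ hmem).1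
    simp [Finsupp.single_apply] at this
    omega
  -- generic root counting
  have count_roots : ∀ (p : Polynomial F) (n : ℕ), p ≠ 0 → p.natDegree ≤ n →
      (Finset.univ.filter fun x : Fˣ => Polynomial.eval (x:F) p = 0).card ≤ n := by
    intro p n hp hdeg
    have hsub : ∀ x ∈ (Finset.univ.filter fun x : Fˣ => Polynomial.eval (x:F) p = 0),
        (x : F) ∈ p.roots.toFinset := by
      intro x hx
      rw [Finset.mem_filter] at hx
      rw [Multiset.mem_toFinset, Polynomial.mem_roots']
      exact ⟨hp, hx.2⟩
    calc (Finset.univ.filter fun x : Fˣ => Polynomial.eval (x:F) p = 0).card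
        ≤ p.roots.toFinset.card := Finset.card_le_card_of_injOn _ hsub
          (fun x _ y _ h => Units.ext h)
      _ ≤ Multiset.card p.roots := Multiset.toFinset_card_le _
      _ ≤ p.natDegree := Polynomial.card_roots' p
      _ ≤ n := hdeg
  -- the bad set
  set S : Finset Fˣ := Finset.univ.filter (fun y => P y = 0) with hS
  have hScard : S.card ≤ q - 2 := by
    set g : Polynomial F := (Phi F f).coeff (Phi F f).natDegree with hg
    have hΦ : Phi F f ≠ 0 := Phi_ne_zero hf0
    have hg0 : g ≠ 0 := by
      rw [hg, ← Polynomial.leadingCoeff]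
      exact Polynomial.leadingCoeff_ne_zero.mpr hΦ
    have hgdeg : g.natDegree ≤ q - 2 := by
      rw [Polynomial.natDegree_le_iff_coeff_eq_zero]
      intro N hN
      rw [hg, coeff_Phi]
      by_contra h
      have hmem : _ ∈ f.support := MvPolynomial.mem_support_iff.mpr h
      have := (hsupp _ hmem).2
      simp [Finsupp.single_apply] at this
      omega
    have hSsub : S ⊆ Finset.univ.filter fun y : Fˣ => Polynomial.eval (y:F) g = 0 := by
      intro y hy
      rw [hS, Finset.mem_filter] at hy
      rw [Finset.mem_filter]
      refine ⟨Finset.mem_univ _, ?_⟩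
      have h2 : (P y).coeff (Phi F f).natDegree = 0 := by rw [hy.2]; simp
      rw [hg]
      calc Polynomial.eval (y:F) ((Phi F f).coeff (Phi F f).natDegree)
          = (Polynomial.evalRingHom (y:F)) ((Phi F f).coeff (Phi F f).natDegree) := rfl
        _ = (P y).coeff (Phi F f).natDegree := (Polynomial.coeff_map _ _).symm
        _ = 0 := h2
    exact le_trans (Finset.card_le_card hSsub) (count_roots g (q - 2) hg0 hgdeg)
  -- count zeros fiberwise
  have hsplit : (Finset.univ.filter fun t : Fˣ × Fˣ => torusEval F f t = 0).card
      = ∑ y : Fˣ, (Finset.univ.filter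
          fun x : Fˣ => Polynomial.eval (x:F) (P y) = 0).card := by
    rw [Finset.card_filter]
    rw [Fintype.sum_prod_type_right]
    congr 1
    ext y
    rw [Finset.card_filter]
    congr 1
    ext x
    rw [heval (x, y)]
  rw [hsplit]
  have hcardU : Fintype.card Fˣ = q - 1 := Fintype.card_units F
  have hbound : ∀ y : Fˣ, (Finset.univ.filter
      fun x : Fˣ => Polynomial.eval (x:F) (P y) = 0).card ≤ q - 1 := by
    intro y
    calc _ ≤ (Finset.univ : Finset Fˣ).card := Finset.card_filter_le _ _
      _ = q - 1 := by rw [Finset.card_univ, hcardU]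
  have hbound2 : ∀ y : Fˣ, y ∉ S → (Finset.univ.filter
      fun x : Fˣ => Polynomial.eval (x:F) (P y) = 0).card ≤ a := by
    intro y hy
    have hPy : P y ≠ 0 := by
      intro h
      exact hy (by rw [hS]; exact Finset.mem_filter.mpr ⟨Finset.mem_univ _, h⟩)
    exact count_roots _ _ hPy (hPdeg y)
  -- split the sum
  have e1 : Finset.univ.filter (fun y : Fˣ => y ∈ S) = S := by
    ext y; simp [hS]
  have e2 : (Finset.univ.filter (fun y : Fˣ => y ∉ S)).card = (q - 1) - S.card := by
    rw [Finset.filter_not, e1, Finset.card_sdiff_of_subset (Finset.subset_univ S),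
      Finset.card_univ, hcardU]
  have hsum : ∑ y : Fˣ, (Finset.univ.filter
      fun x : Fˣ => Polynomial.eval (x:F) (P y) = 0).card
      ≤ S.card * (q - 1) + ((q - 1) - S.card) * a := by
    rw [← Finset.sum_filter_add_sum_filter_not Finset.univ (fun y => y ∈ S)]
    refine add_le_add ?_ ?_
    · calc ∑ y ∈ Finset.univ.filter (fun y : Fˣ => y ∈ S), (Finset.univ.filter
          fun x : Fˣ => Polynomial.eval (x:F) (P y) = 0).card
          ≤ ∑ _y ∈ Finset.univ.filter (fun y : Fˣ => y ∈ S), (q - 1) :=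
            Finset.sum_le_sum (fun y _ => hbound y)
        _ = S.card * (q - 1) := by rw [Finset.sum_const, e1, smul_eq_mul]
    · calc ∑ y ∈ Finset.univ.filter (fun y : Fˣ => y ∉ S), (Finset.univ.filter
          fun x : Fˣ => Polynomial.eval (x:F) (P y) = 0).card
          ≤ ∑ y ∈ Finset.univ.filter (fun y : Fˣ => y ∉ S), a :=
            Finset.sum_le_sum (fun y hy =>
              hbound2 y (Finset.mem_filter.mp hy).2)
        _ = ((q - 1) - S.card) * a := by
            rw [Finset.sum_const, smul_eq_mul, e2]
  refine le_trans hsum ?_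
  -- final arithmetic
  obtain ⟨k, hk⟩ : ∃ k, q - 1 = S.card + k + 1 := ⟨q - 2 - S.card, by omega⟩
  obtain ⟨m, hm⟩ : ∃ m, q - 1 = a + m + 1 := ⟨q - 2 - a, by omega⟩
  have h1 : q - 1 - S.card = k + 1 := by omega
  have h2 : q - 1 - a = m + 1 := by omega
  rw [h1, h2]
  have h3 : m + 1 ≤ (q - 1) ^ 2 := by nlinarith
  rw [Nat.le_sub_iff_add_le h3]
  nlinarith
end

section
/- The toric code C_□ associated to the polytope with vertices (0,0),(a,0),(b,q−2),(0,q−2), with 0 ≤ b ≤ a ≤ q−2, has length (q−1)², dimension ((q−1)(a+b+1)+gcd(a−b,q−2)+1)/2, and minimum distance at least q−1−a. -/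
open MvPolynomial

/-- The toric code associated to the lattice points `U`: the image under evaluation at
all points of the torus of the span of the monomials with exponents in `U`. -/
noncomputable def toricCode (F : Type*) [Field F] (U : Set (ℕ × ℕ)) :
    Submodule F (Fˣ × Fˣ → F) :=
  Submodule.map (torusEval F)
    (Submodule.span F {m : MvPolynomial (Fin 2) F | ∃ u ∈ U, m = X 0 ^ u.1 * X 1 ^ u.2})

open Finset

lemma div_pair_aux : ∀ (d : ℕ), ∀ (n t : ℕ), 0 < n → t ≤ d * n →
    (d * n - t) / n + t / n + 1 = d + (if n ∣ t then 1 else 0) := by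
  intro d
  induction d with
  | zero => intro n t hn ht; simp at ht; simp [ht]
  | succ d ih =>
    intro n t hn ht
    have hsm : (d + 1) * n = d * n + n := by ring
    rcases le_or_gt t (d * n) with h | h
    · have h1 : (d + 1) * n - t = (d * n - t) + n := by omega
      rw [h1, Nat.add_div_right _ hn]
      have := ih n t hn h
      omega
    · obtain ⟨s, rfl⟩ : ∃ s, t = d * n + s := ⟨t - d * n, by omega⟩
      have hsn : s ≤ n := by omega
      have hs0 : 0 < s := by omega
      have h5 : (d * n + s) / n = s / n + d := by
        rw [add_comm, Nat.add_mul_div_right _ _ hn]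
      have hdvd : (n ∣ d * n + s) ↔ (n ∣ s) := by
        constructor
        · intro hh; exact (Nat.dvd_add_right (dvd_mul_left n d)).mp hh
        · intro hh; exact (dvd_mul_left n d).add hh
      rcases eq_or_lt_of_le hsn with heq | hlt
      · have h2 : (d + 1) * n - (d * n + s) = 0 := by omega
        rw [h2, h5, Nat.zero_div]
        have h8 : s / n = 1 := by rw [heq, Nat.div_self hn]
        have h9 : n ∣ s := by rw [heq]
        rw [h8, if_pos (hdvd.mpr h9)]; omega
      · have h3 : (d + 1) * n - (d * n + s) = n - s := by omega
        have h4 : (n - s) / n = 0 := Nat.div_eq_of_lt (by omega)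
        have h6 : s / n = 0 := Nat.div_eq_of_lt hlt
        have h7 : ¬ n ∣ s := by
          intro hh; have := Nat.le_of_dvd hs0 hh; omega
        rw [h3, h4, h5, h6, if_neg (by rw [hdvd]; exact h7)]; omega

lemma row_pair (a d n j : ℕ) (hd : d ≤ a) (hn : 0 < n) (hj : j ≤ n) :
    (a * n - d * j) / n + (a * n - d * (n - j)) / n + 1
      = (a - d) + a + (if n ∣ d * j then 1 else 0) := by
  obtain ⟨e, rfl⟩ : ∃ e, a = d + e := ⟨a - d, by omega⟩
  have e1 : d * (n - j) + d * j = d * n := by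
    rw [← Nat.mul_add, Nat.sub_add_cancel hj]
  have e2 : (d + e) * n = d * n + e * n := by ring
  have h1 : (d + e) * n - d * j = d * (n - j) + e * n := by omega
  have h2 : (d + e) * n - d * (n - j) = d * j + e * n := by omega
  rw [h1, h2, Nat.add_mul_div_right _ _ hn, Nat.add_mul_div_right _ _ hn]
  have h3 : d * (n - j) = d * n - d * j := by omega
  have h4 := div_pair_aux d n (d * j) hn (Nat.mul_le_mul le_rfl hj)
  rw [h3]
  omega

lemma ind_sum (d n : ℕ) (hn : 0 < n) :
    ∑ j ∈ range (n + 1), (if n ∣ d * j then 1 else 0) = Nat.gcd d n + 1 := by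
  classical
  rw [← Finset.card_filter]
  set g := Nat.gcd d n with hg
  have hgn : g ∣ n := Nat.gcd_dvd_right d n
  have hgd : g ∣ d := Nat.gcd_dvd_left d n
  have hg0 : 0 < g := Nat.gcd_pos_of_pos_right d hn
  set m := n / g with hm
  have hm0 : 0 < m := Nat.div_pos (Nat.le_of_dvd hn hgn) hg0
  have hnm : n = g * m := by
    rw [hm, Nat.mul_div_cancel' hgn]
  obtain ⟨d', hd'⟩ := hgd
  have hcop : Nat.Coprime d' m := by
    have h := Nat.coprime_div_gcd_div_gcd (m := d) (n := n) (by rw [← hg]; exact hg0)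
    have e3 : d / Nat.gcd d n = d' := by rw [← hg, hd', Nat.mul_div_cancel_left _ hg0]
    have e4 : n / Nat.gcd d n = m := by rw [← hg]
    rwa [e3, e4] at h
  have key : ∀ j, n ∣ d * j ↔ m ∣ j := by
    intro j
    constructor
    · intro hh
      have h1 : g * m ∣ g * (d' * j) := by
        rw [← hnm, ← mul_assoc, ← hd']; exact hh
      have h2 : m ∣ d' * j := (mul_dvd_mul_iff_left (by omega : g ≠ 0)).mp h1
      exact Nat.Coprime.dvd_of_dvd_mul_left (hcop.symm) h2
    · rintro ⟨k, rfl⟩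
      exact ⟨d' * k, by rw [hd', hnm]; ring⟩
  have hfe : (range (n + 1)).filter (fun j => n ∣ d * j)
      = (range (g + 1)).image (fun k => k * m) := by
    ext x
    simp only [mem_filter, mem_range, mem_image, key]
    constructor
    · rintro ⟨hx, k, rfl⟩
      refine ⟨k, ?_, mul_comm k m⟩
      by_contra hk
      have h1 : m * (g + 1) ≤ m * k := Nat.mul_le_mul le_rfl (by omega)
      have h2 : m * (g + 1) = m * g + m := by ring
      have h3 : g * m = m * g := mul_comm g m
      omega
    · rintro ⟨k, hk, rfl⟩
      constructor
      · have h1 : k * m ≤ g * m := Nat.mul_le_mul (by omega) le_rfl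
        omega
      · exact dvd_mul_left m k
  rw [hfe, Finset.card_image_of_injective _ (fun x y h =>
    Nat.eq_of_mul_eq_mul_right hm0 h), Finset.card_range]

lemma sum_rows (a d n : ℕ) (hd : d ≤ a) (hn : 0 < n) :
    2 * ∑ j ∈ range (n + 1), ((a * n - d * j) / n + 1)
      = (n + 1) * ((a - d) + a + 1) + Nat.gcd d n + 1 := by
  have refl1 : ∑ j ∈ range (n + 1), (a * n - d * (n - j)) / n
      = ∑ j ∈ range (n + 1), (a * n - d * j) / n := by
    have := Finset.sum_range_reflect (fun j => (a * n - d * j) / n) (n + 1)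
    simpa using this
  have hsum : ∑ j ∈ range (n + 1),
      ((a * n - d * j) / n + (a * n - d * (n - j)) / n + 1)
      = ∑ j ∈ range (n + 1), ((a - d) + a + (if n ∣ d * j then 1 else 0)) := by
    refine Finset.sum_congr rfl fun j hj => ?_
    exact row_pair a d n j hd hn (by simp at hj; omega)
  rw [Finset.sum_add_distrib, Finset.sum_add_distrib, Finset.sum_add_distrib, refl1,
    ind_sum d n hn] at hsum
  simp only [Finset.sum_const, Finset.card_range, smul_eq_mul, mul_one] at hsum
  rw [Finset.sum_add_distrib]
  simp only [Finset.sum_const, Finset.card_range, smul_eq_mul, mul_one]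
  have expand : (n + 1) * ((a - d) + a + 1) = (n + 1) * ((a - d) + a) + (n + 1) := by ring
  omega

/-- The explicit finite set of lattice points of the trapezoid. -/
def goodSet (q a b : ℕ) : Finset (ℕ × ℕ) :=
  (Finset.range (a + 1) ×ˢ Finset.range (q - 1)).filter
    (fun u => u.1 * (q - 2) + (a - b) * u.2 ≤ a * (q - 2))


lemma goodSet_card (q a b : ℕ) (hba : b ≤ a) (haq : a ≤ q - 2) (hq : 2 ≤ q) :
    (goodSet q a b).card = ((q - 1) * (a + b + 1) + Nat.gcd (a - b) (q - 2) + 1) / 2 := by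
  rcases eq_or_lt_of_le hq with heq | hq3
  · -- q = 2
    have ha0 : a = 0 := by omega
    have hb0 : b = 0 := by omega
    subst ha0; subst hb0; rw [← heq]
    decide
  · -- q ≥ 3
    set n := q - 2 with hn
    have hn0 : 0 < n := by omega
    have hq1 : q - 1 = n + 1 := by omega
    set d := a - b with hd
    have hdb : a - d = b := by omega
    have hda : d ≤ a := by omega
    have hcard : (goodSet q a b).card
        = ∑ j ∈ range (n + 1), ((a * n - d * j) / n + 1) := by
      rw [goodSet, Finset.card_filter, hq1, Finset.sum_product_right]
      refine Finset.sum_congr rfl fun j hj => ?_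
      have hfil : (range (a + 1)).filter (fun i => i * n + d * j ≤ a * n)
          = range ((a * n - d * j) / n + 1) := by
        have hdj : d * j ≤ a * n := by
          have h1 : d * j ≤ a * j := Nat.mul_le_mul hda le_rfl
          have h2 : a * j ≤ a * n := Nat.mul_le_mul le_rfl (by simp at hj; omega)
          omega
        ext i
        simp only [mem_filter, mem_range, Nat.lt_succ_iff]
        constructor
        · rintro ⟨hia, hin⟩
          rw [Nat.le_div_iff_mul_le hn0]
          omega
        · intro hi
          rw [Nat.le_div_iff_mul_le hn0] at hi
          have hia : i * n ≤ a * n := by omega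
          exact ⟨Nat.le_of_mul_le_mul_right hia hn0, by omega⟩
      calc ∑ i ∈ range (a + 1), (if i * n + d * j ≤ a * n then 1 else 0)
          = ((range (a + 1)).filter (fun i => i * n + d * j ≤ a * n)).card :=
            (Finset.card_filter _ _).symm
        _ = (a * n - d * j) / n + 1 := by rw [hfil, Finset.card_range]
    have h2 := sum_rows a d n hda hn0
    rw [← hcard] at h2
    rw [hdb] at h2
    rw [hq1]
    have hre : (n + 1) * (b + a + 1) = (n + 1) * (a + b + 1) := by ring
    omega

lemma latticeU_eq (q a b : ℕ) (hba : b ≤ a) (haq : a ≤ q - 2) (hq : 2 ≤ q) :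
    latticeU q a b = ↑(goodSet q a b) := by
  rcases eq_or_lt_of_le hq with heq | hq3
  · -- q = 2, a = b = 0
    have ha0 : a = 0 := by omega
    have hb0 : b = 0 := by omega
    subst ha0; subst hb0
    rw [← heq]
    have hgs : goodSet 2 0 0 = {((0:ℕ), (0:ℕ))} := by decide
    have hv : ({((0 : ℝ), (0 : ℝ)), (((0:ℕ) : ℝ), 0), (((0:ℕ) : ℝ), ((2:ℕ) : ℝ) - 2),
        (0, ((2:ℕ) : ℝ) - 2)} : Set (ℝ × ℝ)) = {((0:ℝ), (0:ℝ))} := by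
      norm_num
    ext u
    simp only [latticeU, Set.mem_setOf_eq, hv, convexHull_singleton, Set.mem_singleton_iff,
      Prod.mk.injEq, hgs, Finset.coe_singleton]
    constructor
    · rintro ⟨h1, h2⟩
      have e1 : u.1 = 0 := by exact_mod_cast h1
      have e2 : u.2 = 0 := by exact_mod_cast h2
      simp [Prod.ext_iff, e1, e2]
    · intro h
      simp only [Set.mem_singleton_iff, Prod.ext_iff] at h
      obtain ⟨e1, e2⟩ := h
      constructor
      · exact_mod_cast congrArg (Nat.cast (R := ℝ)) e1
      · exact_mod_cast congrArg (Nat.cast (R := ℝ)) e2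
  · -- q ≥ 3
    set n := q - 2 with hn
    have hn0 : 0 < n := by omega
    have hnq : (q : ℝ) - 2 = (n : ℝ) := by
      rw [hn]; push_cast [Nat.cast_sub (by omega : 2 ≤ q)]; ring
    have hν : (0 : ℝ) < (n : ℝ) := by exact_mod_cast hn0
    set V : Set (ℝ × ℝ) := {((0 : ℝ), (0 : ℝ)), ((a : ℝ), 0), ((b : ℝ), (q : ℝ) - 2),
      (0, (q : ℝ) - 2)} with hV
    set H : Set (ℝ × ℝ) := {p | 0 ≤ p.1 ∧ 0 ≤ p.2 ∧ p.2 ≤ (n : ℝ) ∧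
      p.1 * n + ((a : ℝ) - b) * p.2 ≤ (a : ℝ) * n} with hH
    have hconv : Convex ℝ H := by
      have c1 : Convex ℝ {p : ℝ × ℝ | 0 ≤ p.1} :=
        convex_halfSpace_ge (⟨fun _ _ => rfl, fun _ _ => by simp⟩ : IsLinearMap ℝ Prod.fst) 0
      have c2 : Convex ℝ {p : ℝ × ℝ | 0 ≤ p.2} :=
        convex_halfSpace_ge (⟨fun _ _ => rfl, fun _ _ => by simp⟩ : IsLinearMap ℝ Prod.snd) 0
      have c3 : Convex ℝ {p : ℝ × ℝ | p.2 ≤ (n : ℝ)} :=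
        convex_halfSpace_le (⟨fun _ _ => rfl, fun _ _ => by simp⟩ : IsLinearMap ℝ Prod.snd) _
      have c4 : Convex ℝ {p : ℝ × ℝ | p.1 * n + ((a : ℝ) - b) * p.2 ≤ (a : ℝ) * n} := by
        refine convex_halfSpace_le ⟨fun p r => ?_, fun c p => ?_⟩ _
        · simp only [Prod.fst_add, Prod.snd_add]; ring
        · simp only [Prod.smul_fst, Prod.smul_snd, smul_eq_mul]; ring
      have : H = {p : ℝ × ℝ | 0 ≤ p.1} ∩ ({p | 0 ≤ p.2} ∩ ({p | p.2 ≤ (n : ℝ)} ∩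
          {p | p.1 * n + ((a : ℝ) - b) * p.2 ≤ (a : ℝ) * n})) := by
        ext p; simp only [hH, Set.mem_inter_iff, Set.mem_setOf_eq]
      rw [this]
      exact c1.inter (c2.inter (c3.inter c4))
    have hVH : V ⊆ H := by
      rw [hV, hH]
      rintro p hp
      simp only [Set.mem_insert_iff, Set.mem_singleton_iff] at hp
      have hb0 : (0:ℝ) ≤ b := Nat.cast_nonneg b
      have ha0 : (0:ℝ) ≤ a := Nat.cast_nonneg a
      have hba' : (b:ℝ) ≤ a := Nat.cast_le.mpr hba
      rcases hp with rfl | rfl | rfl | rfl <;>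
        simp only [Set.mem_setOf_eq, hnq] <;>
        refine ⟨?_, ?_, ?_, ?_⟩ <;>
        first
          | positivity
          | exact le_rfl
          | nlinarith [hν.le, mul_nonneg hb0 hν.le, mul_nonneg ha0 hν.le]
    have hhull_sub : convexHull ℝ V ⊆ H := convexHull_min hVH hconv
    ext u
    obtain ⟨i, j⟩ := u
    simp only [latticeU, Set.mem_setOf_eq, Finset.coe_filter, goodSet, Finset.mem_coe,
      Finset.mem_filter, Finset.mem_product, Finset.mem_range]
    constructor
    · intro hmem
      have hH' := hhull_sub hmem
      rw [hH] at hH'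
      obtain ⟨h1, h2, h3, h4⟩ := hH'
      have h3' : (j : ℝ) ≤ n := by simpa using h3
      have hj : j ≤ n := by exact_mod_cast h3'
      have hcast : ((a : ℝ) - b) = ((a - b : ℕ) : ℝ) := by
        push_cast [Nat.cast_sub hba]; ring
      have h4'' : (i:ℝ) * n + ((a - b : ℕ) : ℝ) * j ≤ (a:ℝ) * n := by
        rw [← hcast]; simpa using h4
      have h4' : i * n + (a - b) * j ≤ a * n := by exact_mod_cast h4''
      have hia : i ≤ a := by
        have : i * n ≤ a * n := by omega
        exact Nat.le_of_mul_le_mul_right this hn0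
      exact ⟨⟨by omega, by omega⟩, h4'⟩
    · rintro ⟨⟨hia, hjq⟩, hineq⟩
      -- build the convex combination
      have hj : (j : ℝ) ≤ n := by exact_mod_cast (by omega : j ≤ n)
      have hj0 : (0:ℝ) ≤ j := Nat.cast_nonneg j
      have hcast : ((a : ℝ) - b) = ((a - b : ℕ) : ℝ) := by
        push_cast [Nat.cast_sub hba]; ring
      have hineq' : (i:ℝ) * n + ((a:ℝ) - b) * j ≤ (a:ℝ) * n := by
        rw [hcast]; exact_mod_cast hineq
      set t : ℝ := (j : ℝ) / n with ht
      have ht0 : 0 ≤ t := by positivity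
      have ht1 : t ≤ 1 := by rw [ht, div_le_one hν]; exact hj
      have hKhull : Convex ℝ (convexHull ℝ V) := convex_convexHull ℝ V
      have hm1 : ((0:ℝ), (0:ℝ)) ∈ convexHull ℝ V := subset_convexHull ℝ V (by simp [hV])
      have hm2 : ((a:ℝ), (0:ℝ)) ∈ convexHull ℝ V := subset_convexHull ℝ V (by simp [hV])
      have hm3 : ((b:ℝ), (q:ℝ) - 2) ∈ convexHull ℝ V := subset_convexHull ℝ V (by simp [hV])
      have hm4 : ((0:ℝ), (q:ℝ) - 2) ∈ convexHull ℝ V := subset_convexHull ℝ V (by simp [hV])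
      rw [hnq] at hm3 hm4
      have hP1 : ((0:ℝ), (j:ℝ)) ∈ convexHull ℝ V := by
        have : ((0:ℝ), (j:ℝ)) ∈ segment ℝ ((0:ℝ), (0:ℝ)) ((0:ℝ), (n:ℝ)) := by
          refine ⟨1 - t, t, by linarith, ht0, by ring, ?_⟩
          simp only [Prod.smul_mk, smul_eq_mul, Prod.mk_add_mk]
          refine Prod.ext ?_ ?_ <;> simp [ht]
          field_simp
        exact hKhull.segment_subset hm1 hm4 this
      set R : ℝ := ((a:ℝ) * n - ((a:ℝ) - b) * j) / n with hR
      have hP2 : ((R : ℝ), (j:ℝ)) ∈ convexHull ℝ V := by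
        have : ((R:ℝ), (j:ℝ)) ∈ segment ℝ ((a:ℝ), (0:ℝ)) ((b:ℝ), (n:ℝ)) := by
          refine ⟨1 - t, t, by linarith, ht0, by ring, ?_⟩
          simp only [Prod.smul_mk, smul_eq_mul, Prod.mk_add_mk]
          refine Prod.ext ?_ ?_ <;> simp [ht, hR]
          · field_simp; ring
          · field_simp
        exact hKhull.segment_subset hm2 hm3 this
      have hiR : (i : ℝ) ≤ R := by
        rw [hR, le_div_iff₀ hν]
        linarith
      have hi0 : (0:ℝ) ≤ i := Nat.cast_nonneg i
      have hfinal : ((i:ℝ), (j:ℝ)) ∈ segment ℝ ((0:ℝ), (j:ℝ)) ((R:ℝ), (j:ℝ)) := by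
        rcases eq_or_lt_of_le (hi0.trans hiR) with hR0 | hR0
        · -- R = 0, so i = 0
          have hi00 : (i:ℝ) = 0 := le_antisymm (by linarith) hi0
          rw [hi00, ← hR0]
          exact left_mem_segment ℝ _ _
        · set s : ℝ := (i : ℝ) / R with hs
          have hs0 : 0 ≤ s := by positivity
          have hs1 : s ≤ 1 := by rw [hs, div_le_one hR0]; exact hiR
          refine ⟨1 - s, s, by linarith, hs0, by ring, ?_⟩
          simp only [Prod.smul_mk, smul_eq_mul, Prod.mk_add_mk]
          refine Prod.ext ?_ ?_ <;> simp [hs]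
          · field_simp
          · ring
      exact hKhull.segment_subset hP1 hP2 hfinal

/-- The character on the torus given by an exponent vector. -/
def torusChar (F : Type*) [Field F] (u : ℕ × ℕ) : (Fˣ × Fˣ) →* F where
  toFun t := (t.1 : F) ^ u.1 * (t.2 : F) ^ u.2
  map_one' := by simp
  map_mul' t s := by
    simp only [Prod.fst_mul, Prod.snd_mul, Units.val_mul, mul_pow]
    ring

lemma torusEval_monomial (F : Type*) [Field F] (u : ℕ × ℕ) :
    torusEval F (X 0 ^ u.1 * X 1 ^ u.2) = ⇑(torusChar F u) := by
  funext t
  simp [torusEval, torusChar]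

lemma torusChar_injOn (F : Type*) [Field F] [Fintype F] [DecidableEq F] (u v : ℕ × ℕ)
    (hu1 : u.1 < Fintype.card F - 1) (hu2 : u.2 < Fintype.card F - 1)
    (hv1 : v.1 < Fintype.card F - 1) (hv2 : v.2 < Fintype.card F - 1)
    (h : torusChar F u = torusChar F v) : u = v := by
  obtain ⟨g, hg⟩ := IsCyclic.exists_generator (α := Fˣ)
  have horder : orderOf g = Fintype.card F - 1 := by
    rw [orderOf_eq_card_of_forall_mem_zpowers hg, Nat.card_eq_fintype_card, Fintype.card_units]
  have horder' : orderOf ((g : F)) = Fintype.card F - 1 := by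
    rw [orderOf_units, horder]
  have h1 := DFunLike.congr_fun h ((g, 1) : Fˣ × Fˣ)
  have h2 := DFunLike.congr_fun h ((1, g) : Fˣ × Fˣ)
  simp only [torusChar, MonoidHom.coe_mk, OneHom.coe_mk, Units.val_one, one_pow, mul_one,
    one_mul] at h1 h2
  have e1 : u.1 = v.1 := by
    apply pow_injOn_Iio_orderOf (x := (g : F)) <;> simp [horder', Set.mem_Iio]
    · exact hu1
    · exact hv1
    · exact h1
  have e2 : u.2 = v.2 := by
    apply pow_injOn_Iio_orderOf (x := (g : F)) <;> simp [horder', Set.mem_Iio]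
    · exact hu2
    · exact hv2
    · exact h2
  exact Prod.ext e1 e2

lemma toricCode_finrank (F : Type*) [Field F] [Fintype F] [DecidableEq F] (S : Finset (ℕ × ℕ))
    (hS : ∀ u ∈ S, u.1 < Fintype.card F - 1 ∧ u.2 < Fintype.card F - 1) :
    Module.finrank F (toricCode F ↑S) = S.card := by
  classical
  have hM : {m : MvPolynomial (Fin 2) F | ∃ u ∈ (↑S : Set (ℕ × ℕ)), m = X 0 ^ u.1 * X 1 ^ u.2}
      = (fun u : ℕ × ℕ => X 0 ^ u.1 * X 1 ^ u.2) '' ↑S := by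
    ext m
    simp only [Set.mem_setOf_eq, Set.mem_image]
    constructor
    · rintro ⟨u, hu, rfl⟩; exact ⟨u, hu, rfl⟩
    · rintro ⟨u, hu, rfl⟩; exact ⟨u, hu, rfl⟩
  have h1 : toricCode F ↑S
      = Submodule.span F (Set.range fun u : ↥S => ⇑(torusChar F u)) := by
    rw [toricCode, Submodule.map_span, hM, ← Set.image_comp, Set.image_eq_range]
    exact congrArg (Submodule.span F) (congrArg Set.range
      (funext fun u : ↥S => torusEval_monomial F (u : ℕ × ℕ)))
  have hinj : Function.Injective (fun u : ↥S => torusChar F u) := by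
    rintro ⟨u, hu⟩ ⟨v, hv⟩ h
    have := torusChar_injOn F u v (hS u hu).1 (hS u hu).2 (hS v hv).1 (hS v hv).2 h
    exact Subtype.ext this
  have li : LinearIndependent F (fun u : ↥S => ⇑(torusChar F u)) :=
    (linearIndependent_monoidHom (Fˣ × Fˣ) F).comp (fun u : ↥S => torusChar F u) hinj
  rw [h1, finrank_span_eq_card li, Fintype.card_coe]

lemma min_dist (F : Type*) [Field F] [Fintype F] [DecidableEq F] (a : ℕ)
    (U : Set (ℕ × ℕ)) (hU : ∀ u ∈ U, u.1 ≤ a)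
    (c : Fˣ × Fˣ → F) (hc : c ∈ toricCode F U) (hc0 : c ≠ 0) :
    Fintype.card F - 1 - a ≤ hammingNorm c := by
  classical
  obtain ⟨f, hf, rfl⟩ := hc
  obtain ⟨t0, ht0⟩ := Function.ne_iff.mp hc0
  set η : Fˣ := t0.2 with hη
  set φ : MvPolynomial (Fin 2) F →ₐ[F] Polynomial F :=
    MvPolynomial.aeval (fun i : Fin 2 =>
      if i = 0 then (Polynomial.X : Polynomial F) else Polynomial.C (η : F)) with hφ
  have key : ∀ ξ : Fˣ, torusEval F f (ξ, η) = (φ f).eval (ξ : F) := by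
    intro ξ
    have hcomp := MvPolynomial.comp_aeval (R := F)
      (φ := Polynomial.aeval (R := F) ((ξ : F)))
      (f := fun i : Fin 2 =>
        if i = 0 then (Polynomial.X : Polynomial F) else Polynomial.C (η : F))
    have happ := congrArg (fun ψ => ψ f) hcomp
    simp only [AlgHom.comp_apply] at happ
    have hfun : (fun i : Fin 2 => Polynomial.aeval (R := F) ((ξ : F))
        (if i = 0 then (Polynomial.X : Polynomial F) else Polynomial.C (η : F)))
        = fun i : Fin 2 => if i = 0 then (ξ : F) else (η : F) := by
      funext i
      by_cases h : i = 0 <;> simp [h]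
    rw [hfun] at happ
    have : torusEval F f (ξ, η) = MvPolynomial.aeval
        (fun i : Fin 2 => if i = 0 then ((ξ : F)) else ((η : F))) f := rfl
    rw [this, ← happ, hφ]
    exact congrFun (Polynomial.coe_aeval_eq_eval ((ξ : F))) _
  have hdeg : φ f ∈ Polynomial.degreeLE F (a : WithBot ℕ) := by
    have hspan : Submodule.span F
        {m : MvPolynomial (Fin 2) F | ∃ u ∈ U, m = X 0 ^ u.1 * X 1 ^ u.2}
        ≤ (Polynomial.degreeLE F (a : WithBot ℕ)).comap φ.toLinearMap := by
      rw [Submodule.span_le]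
      rintro m ⟨u, hu, rfl⟩
      simp only [SetLike.mem_coe, Submodule.mem_comap, AlgHom.toLinearMap_apply, map_mul, map_pow, hφ,
        MvPolynomial.aeval_X, if_pos rfl]
      have : ((if (1 : Fin 2) = 0 then (Polynomial.X : Polynomial F) else Polynomial.C (η : F)))
          = Polynomial.C ((η : F)) := by norm_num
      rw [this, Polynomial.mem_degreeLE, ← Polynomial.C_pow]
      calc Polynomial.degree (Polynomial.X ^ u.1 * Polynomial.C ((η : F) ^ u.2))
          ≤ Polynomial.degree ((Polynomial.X : Polynomial F) ^ u.1)
            + Polynomial.degree (Polynomial.C ((η : F) ^ u.2)) := Polynomial.degree_mul_le _ _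
        _ ≤ (u.1 : WithBot ℕ) + 0 := by
            gcongr
            · exact Polynomial.degree_X_pow_le u.1
            · exact Polynomial.degree_C_le
        _ ≤ (a : WithBot ℕ) := by
            rw [add_zero]
            exact_mod_cast Nat.cast_le.mpr (hU u hu)
    exact hspan hf
  have hnatdeg : (φ f).natDegree ≤ a :=
    Polynomial.natDegree_le_iff_degree_le.mpr (Polynomial.mem_degreeLE.mp hdeg)
  have hgne : φ f ≠ 0 := by
    intro h0
    apply ht0
    have : t0 = (t0.1, η) := by rw [hη]
    rw [this, key t0.1, h0]
    simp
  -- count roots among units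
  set Z : Finset Fˣ := Finset.univ.filter (fun ξ : Fˣ => (φ f).eval (ξ : F) = 0) with hZ
  have hZa : Z.card ≤ a := by
    have hinj : Set.InjOn (fun ξ : Fˣ => (ξ : F)) ↑Z := fun x _ y _ h => Units.ext h
    have hmaps : ∀ ξ ∈ Z, (ξ : F) ∈ (φ f).roots.toFinset := by
      intro ξ hξ
      rw [Multiset.mem_toFinset, Polynomial.mem_roots hgne]
      exact (Finset.mem_filter.mp hξ).2
    calc Z.card ≤ (φ f).roots.toFinset.card := Finset.card_le_card_of_injOn _ hmaps hinj
      _ ≤ Multiset.card (φ f).roots := Multiset.toFinset_card_le _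
      _ ≤ (φ f).natDegree := Polynomial.card_roots' _
      _ ≤ a := hnatdeg
  set T : Finset Fˣ := Finset.univ.filter (fun ξ : Fˣ => ¬ ((φ f).eval (ξ : F) = 0)) with hT
  have hZT : Z.card + T.card = Fintype.card F - 1 := by
    rw [hZ, hT, Finset.card_filter_add_card_filter_not, Finset.card_univ,
      Fintype.card_units]
  have hTle : T.card ≤ hammingNorm (torusEval F f) := by
    refine Finset.card_le_card_of_injOn (fun ξ => ((ξ, η) : Fˣ × Fˣ)) ?_ ?_
    · intro ξ hξ
      simp only [hammingNorm, Finset.mem_coe, Finset.mem_filter, Finset.mem_univ, true_and]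
      rw [key ξ]
      exact (Finset.mem_filter.mp hξ).2
    · intro x _ y _ h
      exact (Prod.mk.injEq _ _ _ _).mp h |>.1
  omega

/-- The toric code of the polytope with vertices `(0,0),(a,0),(b,q−2),(0,q−2)`,
`0 ≤ b ≤ a ≤ q−2`, has length `(q−1)²`, dimension
`((q−1)(a+b+1)+gcd(a−b,q−2)+1)/2` and minimum distance at least `q−1−a`. -/
theorem toric_code_parameters (F : Type*) [Field F] [Fintype F] [DecidableEq F] (a b : ℕ)
    (hba : b ≤ a) (haq : a ≤ Fintype.card F - 2) :
    Fintype.card (Fˣ × Fˣ) = (Fintype.card F - 1) ^ 2 ∧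
    Module.finrank F (toricCode F (latticeU (Fintype.card F) a b)) =
      ((Fintype.card F - 1) * (a + b + 1) +
        Nat.gcd (a - b) (Fintype.card F - 2) + 1) / 2 ∧
    ∀ c ∈ toricCode F (latticeU (Fintype.card F) a b), c ≠ 0 →
      Fintype.card F - 1 - a ≤ hammingNorm c := by
  classical
  have hq : 2 ≤ Fintype.card F := Fintype.one_lt_card
  set q := Fintype.card F with hqdef
  have hlat := latticeU_eq q a b hba haq hq
  have hS : ∀ u ∈ goodSet q a b, u.1 < q - 1 ∧ u.2 < q - 1 := by
    intro u hu
    simp only [goodSet, Finset.mem_filter, Finset.mem_product, Finset.mem_range] at hu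
    obtain ⟨⟨h1, h2⟩, -⟩ := hu
    omega
  refine ⟨?_, ?_, ?_⟩
  · rw [Fintype.card_prod, Fintype.card_units, sq]
  · rw [hlat, toricCode_finrank F (goodSet q a b) hS, goodSet_card q a b hba haq hq]
  · intro c hc hc0
    rw [hlat] at hc
    refine min_dist F a ↑(goodSet q a b) ?_ c hc hc0
    intro u hu
    simp only [Finset.mem_coe, goodSet, Finset.mem_filter, Finset.mem_product,
      Finset.mem_range] at hu
    obtain ⟨⟨h1, h2⟩, -⟩ := hu
    omega
end

section
/- A nonzero polynomial f in the span of monomials indexed by lattice points of the Hirzebruch polytope with vertices (0,0),(d,0),(d,e+rd),(0,e) (with d,e,e+rd < q−1) has at most max{d(q−1)+(q−1−d)e, (q−1)(e+dr)} zeros on (F_q*)². -/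
open MvPolynomial

/-- The lattice points of the Hirzebruch polytope with vertices
`(0,0), (d,0), (d,e+rd), (0,e)`. -/
def hirzU (d e r : ℕ) : Set (ℕ × ℕ) :=
  {u : ℕ × ℕ | ((u.1 : ℝ), (u.2 : ℝ)) ∈
    convexHull ℝ {((0 : ℝ), (0 : ℝ)), ((d : ℝ), 0), ((d : ℝ), (e : ℝ) + r * d),
      (0, (e : ℝ))}}

/-- Points of the Hirzebruch polytope satisfy `u₁ ≤ d` and `u₂ ≤ e + r·u₁`. -/
lemma hirz_bounds {d e r : ℕ} {u : ℕ × ℕ} (hu : u ∈ hirzU d e r) :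
    u.1 ≤ d ∧ u.2 ≤ e + r * u.1 := by
  have h1 : convexHull ℝ {((0 : ℝ), (0 : ℝ)), ((d : ℝ), 0), ((d : ℝ), (e : ℝ) + r * d),
      (0, (e : ℝ))} ⊆ {p : ℝ × ℝ | p.1 ≤ d} := by
    apply convexHull_min
    · intro p hp
      rcases hp with h | h | h | h <;> simp_all
    · exact convex_halfSpace_le (LinearMap.isLinear (LinearMap.fst ℝ ℝ ℝ)) _
  have h2 : convexHull ℝ {((0 : ℝ), (0 : ℝ)), ((d : ℝ), 0), ((d : ℝ), (e : ℝ) + r * d),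
      (0, (e : ℝ))} ⊆ {p : ℝ × ℝ | p.2 - r * p.1 ≤ e} := by
    apply convexHull_min
    · intro p hp
      rcases hp with h | h | h | h <;> simp_all <;>
        nlinarith [Nat.cast_nonneg (α := ℝ) d, Nat.cast_nonneg (α := ℝ) e,
          Nat.cast_nonneg (α := ℝ) r]
    · exact convex_halfSpace_le
        (LinearMap.isLinear (LinearMap.snd ℝ ℝ ℝ - (r : ℝ) • LinearMap.fst ℝ ℝ ℝ)) _
  have b1 := h1 hu
  have b2 := h2 hu
  simp only [Set.mem_setOf_eq] at b1 b2
  constructor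
  · exact_mod_cast b1
  · have : (u.2 : ℝ) ≤ e + r * u.1 := by linarith
    exact_mod_cast this

/-- Count of unit zeros of a nonzero one-variable polynomial. -/
lemma units_card_zeros {F : Type*} [Field F] [Fintype F] [DecidableEq F]
    (p : Polynomial F) (hp : p ≠ 0) :
    (Finset.univ.filter fun a : Fˣ => p.eval (a : F) = 0).card ≤ p.natDegree := by
  have h1 : (Finset.univ.filter fun a : Fˣ => p.eval (a : F) = 0).card
      ≤ p.roots.toFinset.card := by
    refine Finset.card_le_card_of_injOn (fun a : Fˣ => (a : F)) ?_ ?_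
    · intro a ha
      simp only [Finset.coe_filter, Finset.mem_coe, Finset.mem_filter, Set.mem_setOf_eq] at ha
      simp [Multiset.mem_toFinset, Polynomial.mem_roots hp, Polynomial.IsRoot, ha.2]
    · intro a _ b _ hab
      exact Units.ext hab
  exact h1.trans ((Multiset.toFinset_card_le _).trans (Polynomial.card_roots' p))

lemma arith_bound (n d e r i s : ℕ) (hi : i ≤ d) (hd : 0 < d) (hdn : d < n)
    (hsn : s ≤ n) (hs : s ≤ e + r * i) :
    s * n + (n - s) * (d - i) ≤ max (d * n + (n - d) * e) (n * (e + d * r)) := by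
  have key : ∀ A B : ℕ, d * (s * n + (n - s) * (d - i)) ≤ (d - i) * A + i * B →
      A ≤ max A B → B ≤ max A B → s * n + (n - s) * (d - i) ≤ max A B := by
    intro A B h hA hB
    have h2 : (d - i) * A + i * B ≤ d * max A B := by
      calc (d - i) * A + i * B ≤ (d - i) * max A B + i * max A B :=
            Nat.add_le_add (Nat.mul_le_mul_left _ hA) (Nat.mul_le_mul_left _ hB)
        _ = d * max A B := by rw [← Nat.add_mul]; congr 1; omega
    exact Nat.le_of_mul_le_mul_left (h.trans h2) hd
  apply key
  · zify [hi, hsn, hdn.le]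
    have h1 : (0:ℤ) ≤ (e:ℤ) + r * i - s := by push_cast; omega
    have h2 : (0:ℤ) ≤ (n:ℤ) - d + i := by push_cast; omega
    have h3 : (0:ℤ) ≤ (r:ℤ) * i * (d - i) := by
      have : (0:ℤ) ≤ (d:ℤ) - i := by push_cast; omega
      positivity
    nlinarith [mul_nonneg h1 h2, mul_nonneg (mul_nonneg (Int.ofNat_nonneg d) h1) h2,
      mul_nonneg (Int.ofNat_nonneg d) h3]
  · exact le_max_left _ _
  · exact le_max_right _ _

/-- A nonzero polynomial supported on the lattice points of the Hirzebruch polytope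
has at most `max{d(q−1)+(q−1−d)e, (q−1)(e+dr)}` zeros on the torus `(Fˣ)²`. -/
theorem hirzebruch_zero_bound (F : Type*) [Field F] [Fintype F] [DecidableEq F]
    (d e r : ℕ) (hd : 0 < d) (he : 0 < e) (hr : 0 < r)
    (hdq : d < Fintype.card F - 1) (heq : e < Fintype.card F - 1)
    (herd : e + r * d < Fintype.card F - 1)
    (f : MvPolynomial (Fin 2) F)
    (hf : f ∈ Submodule.span F
      {m : MvPolynomial (Fin 2) F | ∃ u ∈ hirzU d e r, m = X 0 ^ u.1 * X 1 ^ u.2})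
    (hf0 : f ≠ 0) :
    (Finset.univ.filter fun t : Fˣ × Fˣ => torusEval F f t = 0).card ≤
      max (d * (Fintype.card F - 1) + (Fintype.card F - 1 - d) * e)
        ((Fintype.card F - 1) * (e + d * r)) := by
  classical
  -- support bounds
  have hsupp : ∀ m ∈ f.support, m 0 ≤ d ∧ m 1 ≤ e + r * m 0 := by
    set S : Set (Fin 2 →₀ ℕ) := {m | m 0 ≤ d ∧ m 1 ≤ e + r * m 0} with hS
    have hle : Submodule.span F
        {m : MvPolynomial (Fin 2) F | ∃ u ∈ hirzU d e r, m = X 0 ^ u.1 * X 1 ^ u.2}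
        ≤ MvPolynomial.restrictSupport F S := by
      rw [Submodule.span_le]
      rintro p ⟨u, hu, rfl⟩
      have hmono : (X 0 ^ u.1 * X 1 ^ u.2 : MvPolynomial (Fin 2) F)
          = monomial (Finsupp.single 0 u.1 + Finsupp.single 1 u.2) 1 := by
        simp [X_pow_eq_monomial, monomial_mul]
      rw [SetLike.mem_coe, MvPolynomial.mem_restrictSupport_iff]
      intro m hm
      rw [hmono] at hm
      have hm' := MvPolynomial.support_monomial_subset hm
      simp only [Finset.mem_singleton] at hm'
      subst hm'
      have h0 : ((Finsupp.single (0 : Fin 2) u.1 + Finsupp.single 1 u.2 : Fin 2 →₀ ℕ)) 0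
          = u.1 := by simp [Finsupp.single_apply]
      have h1 : ((Finsupp.single (0 : Fin 2) u.1 + Finsupp.single 1 u.2 : Fin 2 →₀ ℕ)) 1
          = u.2 := by simp [Finsupp.single_apply]
      have := hirz_bounds hu
      constructor <;> simp only [hS, Set.mem_setOf_eq, h0, h1] <;> omega
    have hmem := hle hf
    rw [MvPolynomial.mem_restrictSupport_iff] at hmem
    intro m hm
    exact hmem hm
  -- the minimal x-exponent
  have hne : f.support.Nonempty := by
    rw [Finset.nonempty_iff_ne_empty, Ne, MvPolynomial.support_eq_empty]
    exact hf0
  have hIne : (f.support.image fun m => m 0).Nonempty := hne.image _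
  set i₀ := (f.support.image fun m => m 0).min' hIne with hi₀def
  obtain ⟨m₀, hm₀s, hm₀⟩ : ∃ m ∈ f.support, m 0 = i₀ := by
    have := (f.support.image fun m => m 0).min'_mem hIne
    rw [Finset.mem_image] at this
    obtain ⟨m, hm, hm'⟩ := this
    exact ⟨m, hm, hm'⟩
  have hmin : ∀ m ∈ f.support, i₀ ≤ m 0 := fun m hm =>
    Finset.min'_le _ _ (Finset.mem_image_of_mem _ hm)
  have hi₀d : i₀ ≤ d := hm₀ ▸ (hsupp m₀ hm₀s).1
  -- the one-variable polynomials
  set g : Polynomial F := ∑ m ∈ f.support.filter (fun m => m 0 = i₀),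
      Polynomial.C (MvPolynomial.coeff m f) * Polynomial.X ^ (m 1) with hgdef
  set P : F → Polynomial F := fun b => ∑ m ∈ f.support,
      Polynomial.C (MvPolynomial.coeff m f * b ^ (m 1)) * Polynomial.X ^ (m 0) with hPdef
  -- evaluation identity
  have hEval : ∀ t : Fˣ × Fˣ, torusEval F f t = (P (t.2 : F)).eval (t.1 : F) := by
    intro t
    have h1 : torusEval F f t
        = MvPolynomial.aeval (fun i : Fin 2 => if i = 0 then (t.1 : F) else (t.2 : F)) f :=
      rfl
    rw [h1, MvPolynomial.aeval_def, MvPolynomial.eval₂_eq']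
    simp only [hPdef, Polynomial.eval_finset_sum, Polynomial.eval_mul, Polynomial.eval_C,
      Polynomial.eval_pow, Polynomial.eval_X]
    refine Finset.sum_congr rfl fun m _ => ?_
    rw [Fin.prod_univ_two]
    simp [Algebra.algebraMap_self]
    ring
  -- coefficient formula for `P b`
  have hPcoeff : ∀ (b : F) (i : ℕ), (P b).coeff i
      = ∑ m ∈ f.support.filter (fun m => m 0 = i),
          MvPolynomial.coeff m f * b ^ (m 1) := by
    intro b i
    simp only [hPdef, Polynomial.finset_sum_coeff, Polynomial.coeff_C_mul,
      Polynomial.coeff_X_pow]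
    rw [Finset.sum_filter]
    refine Finset.sum_congr rfl fun m _ => ?_
    by_cases h : m 0 = i
    · simp [h]
    · have h' : ¬ (i = m 0) := fun hh => h hh.symm
      simp [h, h']
  -- `g` evaluated at `b` is the `i₀` coefficient of `P b`
  have hgP : ∀ b : F, (P b).coeff i₀ = g.eval b := by
    intro b
    rw [hPcoeff]
    simp [hgdef, Polynomial.eval_finset_sum]
  -- g is nonzero
  have hg0 : g ≠ 0 := by
    intro hg
    have : g.coeff (m₀ 1) = MvPolynomial.coeff m₀ f := by
      simp only [hgdef, Polynomial.finset_sum_coeff, Polynomial.coeff_C_mul,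
        Polynomial.coeff_X_pow]
      rw [Finset.sum_eq_single m₀]
      · simp
      · intro m hm hne'
        rw [Finset.mem_filter] at hm
        have : ¬ (m₀ 1 = m 1) := by
          intro h'
          apply hne'
          ext j
          fin_cases j
          · show m 0 = m₀ 0
            rw [hm.2, hm₀]
          · exact h'.symm
        simp [this]
      · intro h
        exact absurd (Finset.mem_filter.mpr ⟨hm₀s, hm₀⟩) h
    rw [hg] at this
    simp only [Polynomial.coeff_zero] at this
    exact (MvPolynomial.mem_support_iff.mp hm₀s) this.symm
  -- degree bounds
  have hgdeg : g.natDegree ≤ e + r * i₀ := by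
    apply Polynomial.natDegree_sum_le_of_forall_le
    intro m hm
    rw [Finset.mem_filter] at hm
    refine (Polynomial.natDegree_C_mul_X_pow_le _ _).trans ?_
    have := (hsupp m hm.1).2
    rw [hm.2] at this
    exact this
  have hPdeg : ∀ b : F, (P b).natDegree ≤ d := by
    intro b
    apply Polynomial.natDegree_sum_le_of_forall_le
    intro m hm
    exact (Polynomial.natDegree_C_mul_X_pow_le _ _).trans (hsupp m hm).1
  have hPlow : ∀ (b : F) (j : ℕ), j < i₀ → (P b).coeff j = 0 := by
    intro b j hj
    rw [hPcoeff]
    apply Finset.sum_eq_zero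
    intro m hm
    rw [Finset.mem_filter] at hm
    exact absurd (hm.2 ▸ hmin m hm.1) (by omega)
  -- the bad set of second coordinates
  set Zf : Finset Fˣ := Finset.univ.filter (fun b : Fˣ => g.eval (b : F) = 0) with hZf
  set s : ℕ := Zf.card with hs
  set n : ℕ := Fintype.card Fˣ with hn
  have hscard : s ≤ e + r * i₀ := by
    refine le_trans ?_ hgdeg
    exact units_card_zeros g hg0
  have hsn : s ≤ n := by rw [hs, hn]; exact Finset.card_le_univ _
  -- column counts
  have hcol : ∀ b : Fˣ, b ∉ Zf →
      (Finset.univ.filter fun a : Fˣ => (P (b : F)).eval (a : F) = 0).card ≤ d - i₀ := by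
    intro b hb
    have hgb : g.eval (b : F) ≠ 0 := by
      intro h
      exact hb (Finset.mem_filter.mpr ⟨Finset.mem_univ _, h⟩)
    have hcoeff : (P (b : F)).coeff i₀ ≠ 0 := by rw [hgP]; exact hgb
    have hPb0 : P (b : F) ≠ 0 := fun h => hcoeff (by rw [h]; simp)
    obtain ⟨Q, hQ⟩ : (Polynomial.X ^ i₀ : Polynomial F) ∣ P (b : F) :=
      Polynomial.X_pow_dvd_iff.mpr (hPlow (b : F))
    have hQ0 : Q ≠ 0 := by
      rintro rfl
      rw [mul_zero] at hQ
      exact hPb0 hQ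
    have hQdeg : Q.natDegree ≤ d - i₀ := by
      have h1 : (Polynomial.X ^ i₀ * Q : Polynomial F).natDegree
          = i₀ + Q.natDegree := by
        rw [Polynomial.natDegree_mul (pow_ne_zero _ Polynomial.X_ne_zero) hQ0, Polynomial.natDegree_X_pow]
      have h2 := hPdeg (b : F)
      rw [hQ, h1] at h2
      omega
    have hfilter : (Finset.univ.filter fun a : Fˣ => (P (b : F)).eval (a : F) = 0)
        = Finset.univ.filter fun a : Fˣ => Q.eval (a : F) = 0 := by
      apply Finset.filter_congr
      intro a _
      rw [hQ]
      simp only [Polynomial.eval_mul, Polynomial.eval_pow, Polynomial.eval_X]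
      constructor
      · intro h
        rcases mul_eq_zero.mp h with h' | h'
        · exact absurd h' (pow_ne_zero _ (Units.ne_zero a))
        · exact h'
      · intro h; rw [h, mul_zero]
    rw [hfilter]
    exact (units_card_zeros Q hQ0).trans hQdeg
  -- total count
  have htotal : (Finset.univ.filter fun t : Fˣ × Fˣ => torusEval F f t = 0).card
      = ∑ b : Fˣ, (Finset.univ.filter fun a : Fˣ => (P (b : F)).eval (a : F) = 0).card := by
    rw [Finset.card_filter, Fintype.sum_prod_type_right]
    refine Finset.sum_congr rfl fun b _ => ?_
    rw [Finset.card_filter]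
    refine Finset.sum_congr rfl fun a _ => ?_
    rw [hEval (a, b)]
  rw [htotal]
  have hbound : ∑ b : Fˣ,
      (Finset.univ.filter fun a : Fˣ => (P (b : F)).eval (a : F) = 0).card
      ≤ s * n + (n - s) * (d - i₀) := by
    calc ∑ b : Fˣ, (Finset.univ.filter fun a : Fˣ => (P (b : F)).eval (a : F) = 0).card
        ≤ ∑ b : Fˣ, (if b ∈ Zf then n else d - i₀) := by
          refine Finset.sum_le_sum fun b _ => ?_
          by_cases hb : b ∈ Zf
          · simp only [hb, if_true]
            exact (Finset.card_filter_le _ _).trans (by rw [hn, Finset.card_univ])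
          · simp only [hb, if_false]
            exact hcol b hb
      _ = s * n + (n - s) * (d - i₀) := by
          rw [Finset.sum_ite, Finset.sum_const, Finset.sum_const]
          have e1 : Finset.univ.filter (fun b : Fˣ => b ∈ Zf) = Zf := by
            ext b; simp
          have e2 : (Finset.univ.filter (fun b : Fˣ => b ∉ Zf)).card = n - s := by
            have : Finset.univ.filter (fun b : Fˣ => b ∉ Zf) = Finset.univ \ Zf := by
              ext b; simp
            rw [this, Finset.card_sdiff_of_subset (Finset.subset_univ _), Finset.card_univ, hn, hs]
          rw [e1, e2, smul_eq_mul, smul_eq_mul, hs]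
      _ = s * n + (n - s) * (d - i₀) := rfl
  refine hbound.trans ?_
  have hcards : Fintype.card F - 1 = n := by rw [hn, Fintype.card_units]
  rw [hcards] at hdq ⊢
  exact arith_bound n d e r i₀ s hi₀d hd hdq hsn hscard
end

section
/- Let U be the lattice points of the polytope with vertices (0,0),(a,0),(b,q−2),(0,q−2), 0 ≤ b ≤ a ≤ q−2, 2a ≤ q−2. Then the reduction mod q−1 of the Minkowski sum U+U is exactly the set of lattice points of the convex polytope with vertices (0,0),(2a,0),(a+b,q−2),(0,q−2). -/
/-- The lattice points of the polytope with vertices `(0,0),(a,0),(b,s),(0,s)`. -/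
def latticePts (a b s : ℕ) : Set (ℕ × ℕ) :=
  {u : ℕ × ℕ | ((u.1 : ℝ), (u.2 : ℝ)) ∈
    convexHull ℝ {((0 : ℝ), (0 : ℝ)), ((a : ℝ), 0), ((b : ℝ), (s : ℝ)), (0, (s : ℝ))}}

lemma mem_latticePts_iff (a b s : ℕ) (hs : 1 ≤ s) (hba : b ≤ a) (u : ℕ × ℕ) :
    u ∈ latticePts a b s ↔ u.2 ≤ s ∧ s * u.1 + (a - b) * u.2 ≤ a * s := by
  obtain ⟨x, y⟩ := u
  have hsr : (0:ℝ) < s := by exact_mod_cast hs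
  have hbar : (b:ℝ) ≤ a := by exact_mod_cast hba
  have hbr : (0:ℝ) ≤ b := by positivity
  constructor
  · intro h
    have hC : convexHull ℝ {((0:ℝ),(0:ℝ)), ((a:ℝ),0), ((b:ℝ),(s:ℝ)), (0,(s:ℝ))} ⊆
        {p : ℝ × ℝ | p.2 ≤ (s:ℝ) ∧ (s:ℝ) * p.1 + ((a:ℝ)-(b:ℝ)) * p.2 ≤ (a:ℝ) * s} := by
      apply convexHull_min
      · rintro p hp
        simp only [Set.mem_insert_iff, Set.mem_singleton_iff] at hp
        rcases hp with rfl | rfl | rfl | rfl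
        · exact ⟨hsr.le, by simp only [Set.mem_setOf_eq]; nlinarith⟩
        · exact ⟨hsr.le, by simp only [Set.mem_setOf_eq]; nlinarith⟩
        · exact ⟨le_refl _, by simp only [Set.mem_setOf_eq]; nlinarith⟩
        · exact ⟨le_refl _, by simp only [Set.mem_setOf_eq]; nlinarith⟩
      · rintro p hp q hq' α β hα hβ hαβ
        simp only [Set.mem_setOf_eq] at hp hq' ⊢
        constructor
        · have h1 := mul_le_mul_of_nonneg_left hp.1 hα
          have h2 := mul_le_mul_of_nonneg_left hq'.1 hβ
          have h3 : α * (s:ℝ) + β * s = s := by rw [← add_mul, hαβ, one_mul]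
          simp only [Prod.snd_add, Prod.smul_snd, smul_eq_mul]
          linarith
        · have h1 := mul_le_mul_of_nonneg_left hp.2 hα
          have h2 := mul_le_mul_of_nonneg_left hq'.2 hβ
          have h3 : α * ((a:ℝ) * s) + β * ((a:ℝ) * s) = (a:ℝ) * s := by
            rw [← add_mul, hαβ, one_mul]
          simp only [Prod.fst_add, Prod.snd_add, Prod.smul_fst, Prod.smul_snd, smul_eq_mul]
          nlinarith
    have hm := hC h
    have h1 : (y:ℝ) ≤ (s:ℝ) := hm.1
    have h2 : (s:ℝ) * x + ((a:ℝ) - (b:ℝ)) * y ≤ (a:ℝ) * s := hm.2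
    refine ⟨by exact_mod_cast h1, ?_⟩
    have h2' : (s:ℝ) * x + ((a - b : ℕ) : ℝ) * y ≤ (a:ℝ) * s := by
      rw [Nat.cast_sub hba]; exact h2
    exact_mod_cast h2'
  · rintro ⟨hy, hineq⟩
    simp only [latticePts, Set.mem_setOf_eq]
    set S : Set (ℝ×ℝ) := {((0:ℝ),(0:ℝ)), ((a:ℝ),0), ((b:ℝ),(s:ℝ)), (0,(s:ℝ))} with hS
    have h00 : ((0:ℝ),(0:ℝ)) ∈ convexHull ℝ S := subset_convexHull ℝ S (by simp [hS])
    have ha0 : ((a:ℝ),(0:ℝ)) ∈ convexHull ℝ S := subset_convexHull ℝ S (by simp [hS])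
    have hbs : ((b:ℝ),(s:ℝ)) ∈ convexHull ℝ S := subset_convexHull ℝ S (by simp [hS])
    have h0s : ((0:ℝ),(s:ℝ)) ∈ convexHull ℝ S := subset_convexHull ℝ S (by simp [hS])
    have hyr : (0:ℝ) ≤ y := by positivity
    have hysr : (y:ℝ) ≤ s := by exact_mod_cast hy
    set t : ℝ := (y:ℝ) / s with ht
    have ht0 : 0 ≤ t := by positivity
    have ht1 : t ≤ 1 := by rw [ht, div_le_one hsr]; exact hysr
    have hts : t * s = y := div_mul_cancel₀ _ hsr.ne'
    have hA : ((0:ℝ), (y:ℝ)) ∈ convexHull ℝ S := by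
      apply (convex_convexHull ℝ S).segment_subset h00 h0s
      refine ⟨1 - t, t, by linarith, ht0, by ring, ?_⟩
      have e1 : (1 - t) * (0:ℝ) + t * 0 = 0 := by ring
      have e2 : (1 - t) * (0:ℝ) + t * s = y := by linear_combination hts
      simp only [Prod.smul_mk, smul_eq_mul, Prod.mk_add_mk, e1, e2]
    have hineqr : (s:ℝ) * x + ((a:ℝ) - b) * y ≤ (a:ℝ) * s := by
      have h' : (s:ℝ) * x + ((a - b : ℕ) : ℝ) * y ≤ (a:ℝ) * s := by exact_mod_cast hineq
      rwa [Nat.cast_sub hba] at h'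
    set X : ℝ := (1 - t) * a + t * b with hX
    have hB : (X, (y:ℝ)) ∈ convexHull ℝ S := by
      apply (convex_convexHull ℝ S).segment_subset ha0 hbs
      refine ⟨1 - t, t, by linarith, ht0, by ring, ?_⟩
      have e1 : (1 - t) * (a:ℝ) + t * b = X := by rw [hX]
      have e2 : (1 - t) * (0:ℝ) + t * s = y := by linear_combination hts
      simp only [Prod.smul_mk, smul_eq_mul, Prod.mk_add_mk, e1, e2]
    have hXs : X * s = (a:ℝ) * s - ((a:ℝ) - b) * y := by
      rw [hX]; linear_combination ((b:ℝ) - a) * hts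
    have hxX : (x:ℝ) ≤ X := by
      have hxs : (x:ℝ) * s ≤ X * s := by linarith [hXs, hineqr]
      exact le_of_mul_le_mul_right hxs hsr
    rcases Nat.eq_zero_or_pos x with hx0 | hx
    · have : ((x:ℕ):ℝ) = 0 := by rw [hx0]; norm_num
      rw [this]; exact hA
    · have hxr : (0:ℝ) < x := by exact_mod_cast hx
      have hXpos : (0:ℝ) < X := lt_of_lt_of_le hxr hxX
      set l : ℝ := (x:ℝ) / X with hl
      have hl0 : 0 ≤ l := by positivity
      have hl1 : l ≤ 1 := by rw [hl, div_le_one hXpos]; exact hxX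
      have hlX : l * X = x := div_mul_cancel₀ _ hXpos.ne'
      apply (convex_convexHull ℝ S).segment_subset hA hB
      refine ⟨1 - l, l, by linarith, hl0, by ring, ?_⟩
      have e1 : (1 - l) * (0:ℝ) + l * X = x := by linear_combination hlX
      have e2 : (1 - l) * (y:ℝ) + l * y = y := by ring
      simp only [Prod.smul_mk, smul_eq_mul, Prod.mk_add_mk, e1, e2]

/-- For `0 ≤ b ≤ a ≤ q−2` with `2a ≤ q−2`, the coordinatewise reduction modulo
`q−1` of the Minkowski sum `U + U` of the lattice points `U` of the polytope with
vertices `(0,0),(a,0),(b,q−2),(0,q−2)` is exactly the set of lattice points of the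
polytope with vertices `(0,0),(2a,0),(a+b,q−2),(0,q−2)`. -/
theorem minkowski_sum_reduction (q a b : ℕ) (hq : 3 ≤ q)
    (hba : b ≤ a) (haq : a ≤ q - 2) (h2a : 2 * a ≤ q - 2) :
    (fun p : ℕ × ℕ => (p.1 % (q - 1), p.2 % (q - 1))) ''
        (Set.image2 (· + ·) (latticePts a b (q - 2)) (latticePts a b (q - 2))) =
      latticePts (2 * a) (a + b) (q - 2) := by
  set s : ℕ := q - 2 with hs
  have hs1 : 1 ≤ s := by omega
  have hq1 : q - 1 = s + 1 := by omega
  have hab2 : a + b ≤ 2 * a := by omega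
  have hsub : 2 * a - (a + b) = a - b := by omega
  ext u
  obtain ⟨x, y⟩ := u
  simp only [Set.mem_image, Set.mem_image2, mem_latticePts_iff a b s hs1 hba,
    mem_latticePts_iff (2*a) (a+b) s hs1 hab2, hsub, Prod.mk.injEq]
  constructor
  · rintro ⟨p, ⟨u, ⟨hu2, hu⟩, v, ⟨hv2, hv⟩, rfl⟩, hx, hy⟩
    have hu1 : u.1 ≤ a := by
      have h1 : s * u.1 ≤ s * a := by
        calc s * u.1 ≤ a * s := le_trans (Nat.le_add_right _ _) hu
          _ = s * a := Nat.mul_comm a s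
      exact Nat.le_of_mul_le_mul_left h1 (by omega)
    have hv1 : v.1 ≤ a := by
      have h1 : s * v.1 ≤ s * a := by
        calc s * v.1 ≤ a * s := le_trans (Nat.le_add_right _ _) hv
          _ = s * a := Nat.mul_comm a s
      exact Nat.le_of_mul_le_mul_left h1 (by omega)
    have hxval : x = u.1 + v.1 := by
      rw [← hx, hq1, Prod.fst_add, Nat.mod_eq_of_lt (by omega)]
    have hyle : y ≤ s := by
      rw [← hy, hq1]
      exact Nat.lt_succ_iff.mp (Nat.mod_lt _ (by omega))
    refine ⟨hyle, ?_⟩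
    have hyle2 : y ≤ u.2 + v.2 := by
      rw [← hy, hq1, Prod.snd_add]; exact Nat.mod_le _ _
    calc s * x + (a - b) * y = s * u.1 + s * v.1 + (a - b) * y := by
          rw [hxval, Nat.mul_add]
      _ ≤ s * u.1 + s * v.1 + (a - b) * (u.2 + v.2) :=
          Nat.add_le_add_left (Nat.mul_le_mul_left _ hyle2) _
      _ = (s * u.1 + (a - b) * u.2) + (s * v.1 + (a - b) * v.2) := by ring
      _ ≤ a * s + a * s := Nat.add_le_add hu hv
      _ = 2 * a * s := by ring
  · rintro ⟨hy, hineq⟩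
    have hx2a : x ≤ 2 * a := by
      have h1 : s * x ≤ s * (2 * a) := by
        calc s * x ≤ 2 * a * s := le_trans (Nat.le_add_right _ _) hineq
          _ = s * (2 * a) := Nat.mul_comm _ _
      exact Nat.le_of_mul_le_mul_left h1 (by omega)
    refine ⟨((min x a, 0) + (x - min x a, y) : ℕ × ℕ),
      ⟨(min x a, 0), ⟨Nat.zero_le _, ?_⟩, (x - min x a, y), ⟨hy, ?_⟩, rfl⟩, ?_, ?_⟩
    · show s * min x a + (a - b) * 0 ≤ a * s
      calc s * min x a + (a - b) * 0 = s * min x a := by ring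
        _ ≤ s * a := Nat.mul_le_mul_left _ (min_le_right _ _)
        _ = a * s := Nat.mul_comm _ _
    · show s * (x - min x a) + (a - b) * y ≤ a * s
      rcases le_or_gt x a with hxa | hxa
      · rw [min_eq_left hxa, Nat.sub_self, Nat.mul_zero, Nat.zero_add]
        exact Nat.mul_le_mul (Nat.sub_le _ _) hy
      · rw [min_eq_right hxa.le]
        have e : s * (x - a) + s * a = s * x := by
          rw [← Nat.mul_add]; congr 1; omega
        have key : s * (x - a) + (a - b) * y + s * a ≤ a * s + s * a := by
          calc s * (x - a) + (a - b) * y + s * a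
              = s * (x - a) + s * a + (a - b) * y := by ring
            _ = s * x + (a - b) * y := by rw [e]
            _ ≤ 2 * a * s := hineq
            _ = a * s + s * a := by ring
        exact Nat.le_of_add_le_add_right key
    · show (min x a + (x - min x a)) % (q - 1) = x
      rw [hq1]
      have e : min x a + (x - min x a) = x := by omega
      rw [e, Nat.mod_eq_of_lt (by omega)]
    · show (0 + y) % (q - 1) = y
      rw [hq1, Nat.zero_add, Nat.mod_eq_of_lt (by omega)]
end
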